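/- arXiv:1812.04268 — 4 statements merged into one kernel-verified Lean document; each statement's English description precedes it below -/
import Mathlib

section
/- Let (r,Ω²,f̄) be a smooth solution of the spherically symmetric Einstein–massless Vlasov system with cosmological constant Λ < 0 on an open set 𝒰 ⊆ ℝ², let u₁ : ℝ → ℝ be a C¹ function, and let γ : [0,a) → 𝒰 ∩ {u ≥ u₁(v)} be an affinely parametrized, future-directed null geodesic with angular momentum l > 0 such that γ(0) ∈ {u = u₁(v)}. Fix s ∈ [0,a), and for v̄ ∈ [v(γ(0)), v(γ(s))] let s_{v̄} be the unique parameter with v(γ(s_{v̄})) = v̄; assume the region {(u,v) : v(γ(0)) ≤ v ≤ v(γ(s)), u₁(v) ≤ u ≤ u(γ(s_v))} is contained in 𝒰. Then log(Ω²γ̇^u)(s) − log(Ω²γ̇^u)(0) = ∫_{v(γ(0))}^{v(γ(s))} ∫_{u₁(v)}^{u(γ(s_v))} ( (1/2)·((6m̃/r − 1)/r²)·Ω² − 24π T_uv ) du dv + ∫_{v(γ(0))}^{v(γ(s))} ( ∂_v log Ω² − 2∂_v r/r )(u₁(v), v) dv. Symmetrically, if v₁ : ℝ → ℝ is C¹,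 γ : [0,a) → 𝒰 ∩ {v ≥ v₁(u)} is such a geodesic with γ(0) ∈ {v = v₁(u)}, and s_{ū} is defined by u(γ(s_{ū})) = ū with the corresponding region contained in 𝒰, then log(Ω²γ̇^v)(s) − log(Ω²γ̇^v)(0) = ∫_{u(γ(0))}^{u(γ(s))} ∫_{v₁(u)}^{v(γ(s_u))} ( (1/2)·((6m̃/r − 1)/r²)·Ω² − 24π T_uv ) dv du + ∫_{u(γ(0))}^{u(γ(s))} ( ∂_u log Ω² − 2∂_u r/r )(u, v₁(u)) du. -/
open Real MeasureTheory Filter Set Topology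

noncomputable section

/-- Partial derivative of a function of two real variables in the first (`u`) variable. -/
def pdu (f : ℝ → ℝ → ℝ) (u v : ℝ) : ℝ := deriv (fun x => f x v) u

/-- Partial derivative of a function of two real variables in the second (`v`) variable. -/
def pdv (f : ℝ → ℝ → ℝ) (u v : ℝ) : ℝ := deriv (fun y => f u y) v

/-- The energy–momentum component
`T_vv = (π/2) r⁻² ∫∫ (Ω²pᵘ)² f̄(u,v;pᵘ,l²/(Ω²r²pᵘ),l) (dpᵘ/pᵘ) l dl`. -/
def Tvv (r Ω2 : ℝ → ℝ → ℝ) (fbar : ℝ → ℝ → ℝ → ℝ → ℝ → ℝ) (u v : ℝ) : ℝ :=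
  π / 2 * ((r u v) ^ 2)⁻¹ *
    ∫ p in Ioi (0 : ℝ), p⁻¹ *
      (∫ l in Ioi (0 : ℝ),
        (Ω2 u v * p) ^ 2 * fbar u v p (l ^ 2 / (Ω2 u v * (r u v) ^ 2 * p)) l * l)

/-- The energy–momentum component
`T_uu = (π/2) r⁻² ∫∫ (Ω²pᵛ)² f̄|_{pᵛ = l²/(Ω²r²pᵘ)} (dpᵘ/pᵘ) l dl`. -/
def Tuu (r Ω2 : ℝ → ℝ → ℝ) (fbar : ℝ → ℝ → ℝ → ℝ → ℝ → ℝ) (u v : ℝ) : ℝ :=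
  π / 2 * ((r u v) ^ 2)⁻¹ *
    ∫ p in Ioi (0 : ℝ), p⁻¹ *
      (∫ l in Ioi (0 : ℝ),
        (Ω2 u v * (l ^ 2 / (Ω2 u v * (r u v) ^ 2 * p))) ^ 2 *
          fbar u v p (l ^ 2 / (Ω2 u v * (r u v) ^ 2 * p)) l * l)

/-- The energy–momentum component
`T_uv = (π/2) r⁻² ∫∫ (Ω²pᵘ)(Ω²pᵛ) f̄|_{pᵛ = l²/(Ω²r²pᵘ)} (dpᵘ/pᵘ) l dl`. -/
def Tuv (r Ω2 : ℝ → ℝ → ℝ) (fbar : ℝ → ℝ → ℝ → ℝ → ℝ → ℝ) (u v : ℝ) : ℝ :=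
  π / 2 * ((r u v) ^ 2)⁻¹ *
    ∫ p in Ioi (0 : ℝ), p⁻¹ *
      (∫ l in Ioi (0 : ℝ),
        (Ω2 u v * p) * (Ω2 u v * (l ^ 2 / (Ω2 u v * (r u v) ^ 2 * p))) *
          fbar u v p (l ^ 2 / (Ω2 u v * (r u v) ^ 2 * p)) l * l)

/-- The Hawking mass `m = (r/2)(1 + 4Ω⁻² ∂ᵤr ∂ᵥr)`. -/
def hawk (r Ω2 : ℝ → ℝ → ℝ) (u v : ℝ) : ℝ :=
  r u v / 2 * (1 + 4 * (Ω2 u v)⁻¹ * pdu r u v * pdv r u v)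

/-- The renormalised Hawking mass `m̃ = m − (1/6)Λr³`. -/
def hawkRen (Λ : ℝ) (r Ω2 : ℝ → ℝ → ℝ) (u v : ℝ) : ℝ :=
  hawk r Ω2 u v - 1 / 6 * Λ * (r u v) ^ 3

/-- `f̄` is constant along the reduced null-geodesic flow restricted to the mass shell
`Ω²pᵘpᵛ = l²/r²`: along any `C¹` solution of the reduced geodesic ODE system lying on the
mass shell and inside `Udom`, the value of `f̄` is conserved. -/
def IsMasslessVlasov (Udom : Set (ℝ × ℝ)) (r Ω2 : ℝ → ℝ → ℝ)
    (fbar : ℝ → ℝ → ℝ → ℝ → ℝ → ℝ) : Prop :=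
  ∀ (l : ℝ) (gu gv pu pv : ℝ → ℝ) (s₀ s₁ : ℝ), s₀ ≤ s₁ →
    (∀ s ∈ Icc s₀ s₁, (gu s, gv s) ∈ Udom) →
    (∀ s ∈ Icc s₀ s₁, HasDerivWithinAt gu (pu s) (Icc s₀ s₁) s) →
    (∀ s ∈ Icc s₀ s₁, HasDerivWithinAt gv (pv s) (Icc s₀ s₁) s) →
    (∀ s ∈ Icc s₀ s₁, HasDerivWithinAt (fun t => Ω2 (gu t) (gv t) * pu t)
      ((pdv (fun a b => Real.log (Ω2 a b)) (gu s) (gv s)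
          - 2 * pdv r (gu s) (gv s) / r (gu s) (gv s)) *
        (l ^ 2 / (r (gu s) (gv s)) ^ 2)) (Icc s₀ s₁) s) →
    (∀ s ∈ Icc s₀ s₁, HasDerivWithinAt (fun t => Ω2 (gu t) (gv t) * pv t)
      ((pdu (fun a b => Real.log (Ω2 a b)) (gu s) (gv s)
          - 2 * pdu r (gu s) (gv s) / r (gu s) (gv s)) *
        (l ^ 2 / (r (gu s) (gv s)) ^ 2)) (Icc s₀ s₁) s) →
    (∀ s ∈ Icc s₀ s₁,
      Ω2 (gu s) (gv s) * pu s * pv s = l ^ 2 / (r (gu s) (gv s)) ^ 2) →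
    fbar (gu s₀) (gv s₀) (pu s₀) (pv s₀) l = fbar (gu s₁) (gv s₁) (pu s₁) (pv s₁) l

/-- A massless Vlasov field on the background `(r,Ω²)` over `Udom`: `r, Ω²` are positive
and smooth on `Udom`, `f̄` is smooth, nonnegative, compactly supported in momentum locally
uniformly, and constant along the reduced null-geodesic flow on the mass shell. -/
structure VlasovField (Udom : Set (ℝ × ℝ)) (r Ω2 : ℝ → ℝ → ℝ)
    (fbar : ℝ → ℝ → ℝ → ℝ → ℝ → ℝ) : Prop where
  r_pos : ∀ p ∈ Udom, 0 < r p.1 p.2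
  Ω2_pos : ∀ p ∈ Udom, 0 < Ω2 p.1 p.2
  r_smooth : ContDiffOn ℝ (⊤ : ℕ∞) (fun p : ℝ × ℝ => r p.1 p.2) Udom
  Ω2_smooth : ContDiffOn ℝ (⊤ : ℕ∞) (fun p : ℝ × ℝ => Ω2 p.1 p.2) Udom
  fbar_nonneg : ∀ u v pu pv l, 0 ≤ fbar u v pu pv l
  fbar_smooth : ContDiffOn ℝ (⊤ : ℕ∞)
      (fun q : (ℝ × ℝ) × ℝ × ℝ × ℝ => fbar q.1.1 q.1.2 q.2.1 q.2.2.1 q.2.2.2)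
      (Udom ×ˢ (Ioi (0 : ℝ) ×ˢ (Ioi (0 : ℝ) ×ˢ Ioi (0 : ℝ))))
  fbar_compactSupport : ∀ K : Set (ℝ × ℝ), IsCompact K → K ⊆ Udom →
      ∃ C : Set (ℝ × ℝ × ℝ), IsCompact C ∧
        C ⊆ Ioi (0 : ℝ) ×ˢ (Ioi (0 : ℝ) ×ˢ Ioi (0 : ℝ)) ∧
        ∀ p ∈ K, ∀ q : ℝ × ℝ × ℝ, q ∉ C → fbar p.1 p.2 q.1 q.2.1 q.2.2 = 0
  vlasov : IsMasslessVlasov Udom r Ω2 fbar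

/-- A smooth solution of the spherically symmetric Einstein–massless Vlasov system with
cosmological constant `Λ` on `Udom`. -/
structure EinsteinVlasov (Λ : ℝ) (Udom : Set (ℝ × ℝ)) (r Ω2 : ℝ → ℝ → ℝ)
    (fbar : ℝ → ℝ → ℝ → ℝ → ℝ → ℝ) : Prop where
  field : VlasovField Udom r Ω2 fbar
  wave_r : ∀ p ∈ Udom,
    pdu (fun a b => pdv (fun x y => (r x y) ^ 2) a b) p.1 p.2 =
      -(1 / 2) * (1 - Λ * (r p.1 p.2) ^ 2) * Ω2 p.1 p.2 +
        8 * π * (r p.1 p.2) ^ 2 * Tuv r Ω2 fbar p.1 p.2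
  wave_Ω : ∀ p ∈ Udom,
    pdu (fun a b => pdv (fun x y => Real.log (Ω2 x y)) a b) p.1 p.2 =
      Ω2 p.1 p.2 / (2 * (r p.1 p.2) ^ 2) *
          (1 + 4 * (Ω2 p.1 p.2)⁻¹ * pdu r p.1 p.2 * pdv r p.1 p.2) -
        16 * π * Tuv r Ω2 fbar p.1 p.2
  constraint_u : ∀ p ∈ Udom,
    pdu (fun a b => (Ω2 a b)⁻¹ * pdu r a b) p.1 p.2 =
      -4 * π * r p.1 p.2 * Tuu r Ω2 fbar p.1 p.2 * (Ω2 p.1 p.2)⁻¹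
  constraint_v : ∀ p ∈ Udom,
    pdv (fun a b => (Ω2 a b)⁻¹ * pdv r a b) p.1 p.2 =
      -4 * π * r p.1 p.2 * Tvv r Ω2 fbar p.1 p.2 * (Ω2 p.1 p.2)⁻¹

/-- The double-null domain `𝒰_{U;v_I} = {0 ≤ u < U, u < v < u + v_I}`. -/
def domUV (U vI : ℝ) : Set (ℝ × ℝ) :=
  {p : ℝ × ℝ | 0 ≤ p.1 ∧ p.1 < U ∧ p.1 < p.2 ∧ p.2 < p.1 + vI}

/-- The axis `{u = v}` of the domain `𝒰_{U;v_I}`. -/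
def axisSet (U : ℝ) : Set (ℝ × ℝ) := {p : ℝ × ℝ | 0 ≤ p.1 ∧ p.1 < U ∧ p.2 = p.1}

/-- Conformal infinity `{v = u + v_I}` of the domain `𝒰_{U;v_I}`. -/
def scriSet (U vI : ℝ) : Set (ℝ × ℝ) :=
  {p : ℝ × ℝ | 0 ≤ p.1 ∧ p.1 < U ∧ p.2 = p.1 + vI}

/-- The solution `(r,Ω²)` on `𝒰_{U;v_I}` has a smooth axis `{u = v}` and smooth conformal
infinity `{v = u + v_I}`: `r → 0` and `m̃ → 0` at the axis, `1/r` extends smoothly to `0`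
at infinity, `Ω²/(1−(1/3)Λr²)` extends smoothly and positively to both boundaries, and the
boundary conditions `(∂_u+∂_v)r = 0`, `(∂_v−∂_u)Ω² = 0` hold at the axis while
`(∂_u+∂_v)(1/r) = 0`, `(∂_v−∂_u)(Ω²/(1−(1/3)Λr²)) = 0` hold at infinity. -/
structure SmoothAxisInfinity (Λ U vI : ℝ) (r Ω2 : ℝ → ℝ → ℝ) : Prop where
  r_axis : ∀ q ∈ axisSet U, Tendsto (fun p : ℝ × ℝ => r p.1 p.2)
      (nhdsWithin q (domUV U vI)) (nhds 0)
  rinv_scri : ∃ R : ℝ × ℝ → ℝ,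
      ContDiffOn ℝ (⊤ : ℕ∞) R (domUV U vI ∪ scriSet U vI) ∧
      (∀ p ∈ domUV U vI, R p = (r p.1 p.2)⁻¹) ∧ ∀ p ∈ scriSet U vI, R p = 0
  Ωren_ext : ∃ W : ℝ × ℝ → ℝ,
      ContDiffOn ℝ (⊤ : ℕ∞) W (domUV U vI ∪ axisSet U ∪ scriSet U vI) ∧
      (∀ p ∈ domUV U vI, W p = Ω2 p.1 p.2 / (1 - Λ / 3 * (r p.1 p.2) ^ 2)) ∧
      (∀ p ∈ axisSet U ∪ scriSet U vI, 0 < W p)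
  mtilde_axis : ∀ q ∈ axisSet U,
      Tendsto (fun p : ℝ × ℝ => hawkRen Λ r Ω2 p.1 p.2)
        (nhdsWithin q (domUV U vI)) (nhds 0)
  bc_r_axis : ∀ q ∈ axisSet U,
      Tendsto (fun p : ℝ × ℝ => pdu r p.1 p.2 + pdv r p.1 p.2)
        (nhdsWithin q (domUV U vI)) (nhds 0)
  bc_Ω_axis : ∀ q ∈ axisSet U,
      Tendsto (fun p : ℝ × ℝ => pdv Ω2 p.1 p.2 - pdu Ω2 p.1 p.2)
        (nhdsWithin q (domUV U vI)) (nhds 0)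
  bc_r_scri : ∀ q ∈ scriSet U vI,
      Tendsto (fun p : ℝ × ℝ =>
          pdu (fun a b => (r a b)⁻¹) p.1 p.2 + pdv (fun a b => (r a b)⁻¹) p.1 p.2)
        (nhdsWithin q (domUV U vI)) (nhds 0)
  bc_Ω_scri : ∀ q ∈ scriSet U vI,
      Tendsto (fun p : ℝ × ℝ =>
          pdv (fun a b => Ω2 a b / (1 - Λ / 3 * (r a b) ^ 2)) p.1 p.2 -
            pdu (fun a b => Ω2 a b / (1 - Λ / 3 * (r a b) ^ 2)) p.1 p.2)
        (nhdsWithin q (domUV U vI)) (nhds 0)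

/-- The parameter interval `[0, a)` with extended-real right endpoint. -/
def IcoE (a : EReal) : Set ℝ := {s : ℝ | 0 ≤ s ∧ (s : EReal) < a}

/-- An affinely parametrized, future-directed null geodesic with angular momentum `l > 0`
on the background `(r,Ω²)`, defined on the parameter set `S` and taking values in `Udom`:
a `C¹` curve `(gu, gv)` with positive derivative components `(du, dv)`, lying on the mass
shell and solving the reduced null-geodesic equations. -/
structure NullGeodesic (Udom : Set (ℝ × ℝ)) (r Ω2 : ℝ → ℝ → ℝ)
    (S : Set ℝ) (gu gv du dv : ℝ → ℝ) (l : ℝ) : Prop where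
  l_pos : 0 < l
  mem : ∀ s ∈ S, (gu s, gv s) ∈ Udom
  du_pos : ∀ s ∈ S, 0 < du s
  dv_pos : ∀ s ∈ S, 0 < dv s
  du_cont : ContinuousOn du S
  dv_cont : ContinuousOn dv S
  deriv_u : ∀ s ∈ S, HasDerivWithinAt gu (du s) S s
  deriv_v : ∀ s ∈ S, HasDerivWithinAt gv (dv s) S s
  shell : ∀ s ∈ S,
    Ω2 (gu s) (gv s) * du s * dv s = l ^ 2 / (r (gu s) (gv s)) ^ 2
  geo_u : ∀ s ∈ S, HasDerivWithinAt (fun t => Ω2 (gu t) (gv t) * du t)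
      ((pdv (fun a b => Real.log (Ω2 a b)) (gu s) (gv s)
          - 2 * pdv r (gu s) (gv s) / r (gu s) (gv s)) *
        (l ^ 2 / (r (gu s) (gv s)) ^ 2)) S s
  geo_v : ∀ s ∈ S, HasDerivWithinAt (fun t => Ω2 (gu t) (gv t) * dv t)
      ((pdu (fun a b => Real.log (Ω2 a b)) (gu s) (gv s)
          - 2 * pdu r (gu s) (gv s) / r (gu s) (gv s)) *
        (l ^ 2 / (r (gu s) (gv s)) ^ 2)) S s

/-- The geodesic `γ : [0,a) → Udom` is future-inextendible in `Udom`: it admits no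
extension to a null geodesic in `Udom` defined on a strictly larger interval `[0,a')`. -/
def FutureInextendible (Udom : Set (ℝ × ℝ)) (r Ω2 : ℝ → ℝ → ℝ)
    (a : EReal) (gu gv du dv : ℝ → ℝ) (l : ℝ) : Prop :=
  ¬ ∃ (a' : EReal) (gu' gv' du' dv' : ℝ → ℝ), a < a' ∧
      NullGeodesic Udom r Ω2 (IcoE a') gu' gv' du' dv' l ∧
      ∀ s ∈ IcoE a, gu' s = gu s ∧ gv' s = gv s ∧ du' s = du s ∧ dv' s = dv s

section Toolkit
variable {Udom : Set (ℝ × ℝ)} {f : ℝ → ℝ → ℝ}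

lemma hasDerivAt_slice_fst (hU : IsOpen Udom)
    (hf : ContDiffOn ℝ (⊤ : ℕ∞) (fun p : ℝ × ℝ => f p.1 p.2) Udom)
    {u v : ℝ} (hp : (u, v) ∈ Udom) :
    HasDerivAt (fun x => f x v)
      (fderiv ℝ (fun p : ℝ × ℝ => f p.1 p.2) (u, v) (1, 0)) u := by
  have hd : DifferentiableAt ℝ (fun p : ℝ × ℝ => f p.1 p.2) (u, v) :=
    (hf.differentiableOn (by simp)).differentiableAt (hU.mem_nhds hp)
  have hc : HasDerivAt (fun x : ℝ => ((x, v) : ℝ × ℝ)) ((1 : ℝ), (0 : ℝ)) u :=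
    (hasDerivAt_id u).prodMk (hasDerivAt_const u v)
  exact hd.hasFDerivAt.comp_hasDerivAt u hc

lemma hasDerivAt_slice_snd (hU : IsOpen Udom)
    (hf : ContDiffOn ℝ (⊤ : ℕ∞) (fun p : ℝ × ℝ => f p.1 p.2) Udom)
    {u v : ℝ} (hp : (u, v) ∈ Udom) :
    HasDerivAt (fun y => f u y)
      (fderiv ℝ (fun p : ℝ × ℝ => f p.1 p.2) (u, v) (0, 1)) v := by
  have hd : DifferentiableAt ℝ (fun p : ℝ × ℝ => f p.1 p.2) (u, v) :=
    (hf.differentiableOn (by simp)).differentiableAt (hU.mem_nhds hp)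
  have hc : HasDerivAt (fun y : ℝ => ((u, y) : ℝ × ℝ)) ((0 : ℝ), (1 : ℝ)) v :=
    (hasDerivAt_const v u).prodMk (hasDerivAt_id v)
  exact hd.hasFDerivAt.comp_hasDerivAt v hc

lemma pdu_eq_fderiv (hU : IsOpen Udom)
    (hf : ContDiffOn ℝ (⊤ : ℕ∞) (fun p : ℝ × ℝ => f p.1 p.2) Udom)
    {u v : ℝ} (hp : (u, v) ∈ Udom) :
    pdu f u v = fderiv ℝ (fun p : ℝ × ℝ => f p.1 p.2) (u, v) (1, 0) :=
  (hasDerivAt_slice_fst hU hf hp).deriv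

lemma pdv_eq_fderiv (hU : IsOpen Udom)
    (hf : ContDiffOn ℝ (⊤ : ℕ∞) (fun p : ℝ × ℝ => f p.1 p.2) Udom)
    {u v : ℝ} (hp : (u, v) ∈ Udom) :
    pdv f u v = fderiv ℝ (fun p : ℝ × ℝ => f p.1 p.2) (u, v) (0, 1) :=
  (hasDerivAt_slice_snd hU hf hp).deriv

lemma hasDerivAt_pdu (hU : IsOpen Udom)
    (hf : ContDiffOn ℝ (⊤ : ℕ∞) (fun p : ℝ × ℝ => f p.1 p.2) Udom)
    {u v : ℝ} (hp : (u, v) ∈ Udom) :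
    HasDerivAt (fun x => f x v) (pdu f u v) u := by
  rw [pdu_eq_fderiv hU hf hp]; exact hasDerivAt_slice_fst hU hf hp

lemma hasDerivAt_pdv (hU : IsOpen Udom)
    (hf : ContDiffOn ℝ (⊤ : ℕ∞) (fun p : ℝ × ℝ => f p.1 p.2) Udom)
    {u v : ℝ} (hp : (u, v) ∈ Udom) :
    HasDerivAt (fun y => f u y) (pdv f u v) v := by
  rw [pdv_eq_fderiv hU hf hp]; exact hasDerivAt_slice_snd hU hf hp

lemma contDiffOn_fderiv_apply (hU : IsOpen Udom)
    (hf : ContDiffOn ℝ (⊤ : ℕ∞) (fun p : ℝ × ℝ => f p.1 p.2) Udom) (w : ℝ × ℝ) :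
    ContDiffOn ℝ (⊤ : ℕ∞)
      (fun p => fderiv ℝ (fun p : ℝ × ℝ => f p.1 p.2) p w) Udom := by
  have h1 : ContDiffOn ℝ (⊤ : ℕ∞) (fderiv ℝ (fun p : ℝ × ℝ => f p.1 p.2)) Udom :=
    hf.fderiv_of_isOpen hU (by exact_mod_cast le_top)
  exact (ContinuousLinearMap.apply ℝ ℝ w).contDiff.comp_contDiffOn h1


lemma continuousOn_pdu (hU : IsOpen Udom)
    (hf : ContDiffOn ℝ (⊤ : ℕ∞) (fun p : ℝ × ℝ => f p.1 p.2) Udom) :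
    ContinuousOn (fun p : ℝ × ℝ => pdu f p.1 p.2) Udom :=
  ((contDiffOn_fderiv_apply hU hf (1, 0)).continuousOn).congr
    (fun p hp => pdu_eq_fderiv hU hf (u := p.1) (v := p.2) hp)

lemma continuousOn_pdv (hU : IsOpen Udom)
    (hf : ContDiffOn ℝ (⊤ : ℕ∞) (fun p : ℝ × ℝ => f p.1 p.2) Udom) :
    ContinuousOn (fun p : ℝ × ℝ => pdv f p.1 p.2) Udom :=
  ((contDiffOn_fderiv_apply hU hf (0, 1)).continuousOn).congr
    (fun p hp => pdv_eq_fderiv hU hf (u := p.1) (v := p.2) hp)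

lemma hasDerivAt_pdv_slice (hU : IsOpen Udom)
    (hf : ContDiffOn ℝ (⊤ : ℕ∞) (fun p : ℝ × ℝ => f p.1 p.2) Udom)
    {u v : ℝ} (hp : (u, v) ∈ Udom) :
    HasDerivAt (fun x => pdv f x v)
      (fderiv ℝ (fun p : ℝ × ℝ => fderiv ℝ (fun q : ℝ × ℝ => f q.1 q.2) p (0, 1))
        (u, v) (1, 0)) u := by
  set g : ℝ × ℝ → ℝ :=
    fun p => fderiv ℝ (fun q : ℝ × ℝ => f q.1 q.2) p (0, 1) with hg_def
  have hg : ContDiffOn ℝ (⊤ : ℕ∞) g Udom := contDiffOn_fderiv_apply hU hf (0, 1)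
  have H : HasDerivAt (fun x => g (x, v)) (fderiv ℝ g (u, v) (1, 0)) u :=
    hasDerivAt_slice_fst (f := fun a b => g (a, b)) hU hg hp
  have heq : (fun x => pdv f x v) =ᶠ[𝓝 u] (fun x => g (x, v)) := by
    have hnb : {x : ℝ | (x, v) ∈ Udom} ∈ 𝓝 u :=
      (hU.preimage (continuous_id.prodMk continuous_const)).mem_nhds hp
    filter_upwards [hnb] with x hx using pdv_eq_fderiv hU hf hx
  exact H.congr_of_eventuallyEq heq

lemma hasDerivAt_pdu_slice_snd (hU : IsOpen Udom)
    (hf : ContDiffOn ℝ (⊤ : ℕ∞) (fun p : ℝ × ℝ => f p.1 p.2) Udom)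
    {u v : ℝ} (hp : (u, v) ∈ Udom) :
    HasDerivAt (fun y => pdu f u y)
      (fderiv ℝ (fun p : ℝ × ℝ => fderiv ℝ (fun q : ℝ × ℝ => f q.1 q.2) p (1, 0))
        (u, v) (0, 1)) v := by
  set g : ℝ × ℝ → ℝ :=
    fun p => fderiv ℝ (fun q : ℝ × ℝ => f q.1 q.2) p (1, 0) with hg_def
  have hg : ContDiffOn ℝ (⊤ : ℕ∞) g Udom := contDiffOn_fderiv_apply hU hf (1, 0)
  have H : HasDerivAt (fun y => g (u, y)) (fderiv ℝ g (u, v) (0, 1)) v :=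
    hasDerivAt_slice_snd (f := fun a b => g (a, b)) hU hg hp
  have heq : (fun y => pdu f u y) =ᶠ[𝓝 v] (fun y => g (u, y)) := by
    have hnb : {y : ℝ | (u, y) ∈ Udom} ∈ 𝓝 v :=
      (hU.preimage (continuous_const.prodMk continuous_id)).mem_nhds hp
    filter_upwards [hnb] with y hy using pdu_eq_fderiv hU hf hy
  exact H.congr_of_eventuallyEq heq

lemma hasDerivAt_pdu_pdv (hU : IsOpen Udom)
    (hf : ContDiffOn ℝ (⊤ : ℕ∞) (fun p : ℝ × ℝ => f p.1 p.2) Udom)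
    {u v : ℝ} (hp : (u, v) ∈ Udom) :
    HasDerivAt (fun x => pdv f x v) (pdu (fun a b => pdv f a b) u v) u := by
  have H := hasDerivAt_pdv_slice hU hf hp
  have : pdu (fun a b => pdv f a b) u v = _ := H.deriv
  rwa [this]

lemma pdu_pdv_eq (hU : IsOpen Udom)
    (hf : ContDiffOn ℝ (⊤ : ℕ∞) (fun p : ℝ × ℝ => f p.1 p.2) Udom)
    {u v : ℝ} (hp : (u, v) ∈ Udom) :
    pdu (fun a b => pdv f a b) u v =
      fderiv ℝ (fun p : ℝ × ℝ => fderiv ℝ (fun q : ℝ × ℝ => f q.1 q.2) p (0, 1))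
        (u, v) (1, 0) :=
  (hasDerivAt_pdv_slice hU hf hp).deriv

lemma pdv_pdu_eq (hU : IsOpen Udom)
    (hf : ContDiffOn ℝ (⊤ : ℕ∞) (fun p : ℝ × ℝ => f p.1 p.2) Udom)
    {u v : ℝ} (hp : (u, v) ∈ Udom) :
    pdv (fun a b => pdu f a b) u v =
      fderiv ℝ (fun p : ℝ × ℝ => fderiv ℝ (fun q : ℝ × ℝ => f q.1 q.2) p (1, 0))
        (u, v) (0, 1) :=
  (hasDerivAt_pdu_slice_snd hU hf hp).deriv

lemma continuousOn_pdu_pdv (hU : IsOpen Udom)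
    (hf : ContDiffOn ℝ (⊤ : ℕ∞) (fun p : ℝ × ℝ => f p.1 p.2) Udom) :
    ContinuousOn (fun p : ℝ × ℝ => pdu (fun a b => pdv f a b) p.1 p.2) Udom := by
  have hg : ContDiffOn ℝ (⊤ : ℕ∞)
      (fun p : ℝ × ℝ => fderiv ℝ (fun q : ℝ × ℝ => f q.1 q.2) p (0, 1)) Udom :=
    contDiffOn_fderiv_apply hU hf (0, 1)
  have hc := (contDiffOn_fderiv_apply hU
    (f := fun a b => fderiv ℝ (fun q : ℝ × ℝ => f q.1 q.2) (a, b) (0, 1)) hg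
    (1, 0)).continuousOn
  refine hc.congr (fun p hp => ?_)
  have h := pdu_pdv_eq hU hf (u := p.1) (v := p.2) hp
  simpa using h

lemma pd_comm (hU : IsOpen Udom)
    (hf : ContDiffOn ℝ (⊤ : ℕ∞) (fun p : ℝ × ℝ => f p.1 p.2) Udom)
    {u v : ℝ} (hp : (u, v) ∈ Udom) :
    pdu (fun a b => pdv f a b) u v = pdv (fun a b => pdu f a b) u v := by
  set F : ℝ × ℝ → ℝ := fun p => f p.1 p.2 with hF_def
  set Φ : ℝ × ℝ → (ℝ × ℝ →L[ℝ] ℝ) := fderiv ℝ F with hΦ_def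
  have hΦ : ContDiffOn ℝ (⊤ : ℕ∞) Φ Udom := hf.fderiv_of_isOpen hU (by exact_mod_cast le_top)
  have hΦd : DifferentiableAt ℝ Φ (u, v) :=
    (hΦ.differentiableOn (by simp)).differentiableAt (hU.mem_nhds hp)
  have hev : ∀ᶠ y in 𝓝 (u, v), HasFDerivAt F (Φ y) y := by
    filter_upwards [hU.mem_nhds hp] with y hy using
      ((hf.differentiableOn (by simp)).differentiableAt
        (hU.mem_nhds hy)).hasFDerivAt
  have hsym := second_derivative_symmetric_of_eventually hev hΦd.hasFDerivAt
    ((1 : ℝ), (0 : ℝ)) ((0 : ℝ), (1 : ℝ))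
  have h1 : HasFDerivAt (fun p => Φ p (0, 1))
      ((ContinuousLinearMap.apply ℝ ℝ ((0 : ℝ), (1 : ℝ))).comp (fderiv ℝ Φ (u, v)))
      (u, v) :=
    (ContinuousLinearMap.apply ℝ ℝ ((0 : ℝ), (1 : ℝ))).hasFDerivAt.comp (u, v)
      hΦd.hasFDerivAt
  have h2 : HasFDerivAt (fun p => Φ p (1, 0))
      ((ContinuousLinearMap.apply ℝ ℝ ((1 : ℝ), (0 : ℝ))).comp (fderiv ℝ Φ (u, v)))
      (u, v) :=
    (ContinuousLinearMap.apply ℝ ℝ ((1 : ℝ), (0 : ℝ))).hasFDerivAt.comp (u, v)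
      hΦd.hasFDerivAt
  rw [pdu_pdv_eq hU hf hp, pdv_pdu_eq hU hf hp]
  have e1 : fderiv ℝ (fun p => Φ p (0, 1)) (u, v) (1, 0)
      = fderiv ℝ Φ (u, v) (1, 0) (0, 1) := by rw [h1.fderiv]; rfl
  have e2 : fderiv ℝ (fun p => Φ p (1, 0)) (u, v) (0, 1)
      = fderiv ℝ Φ (u, v) (0, 1) (1, 0) := by rw [h2.fderiv]; rfl
  rw [e1, e2]; exact hsym

end Toolkit

section KeyIdentity


/-- The abstract double-integral identity along a curve. -/
lemma key_identity {Udom : Set (ℝ × ℝ)} {h F : ℝ → ℝ → ℝ}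
    (hhc : ContinuousOn (fun p : ℝ × ℝ => h p.1 p.2) Udom)
    (hder : ∀ p ∈ Udom, HasDerivAt (fun x => h x p.2) (F p.1 p.2) p.1)
    (hFc : ContinuousOn (fun p : ℝ × ℝ => F p.1 p.2) Udom)
    {s : ℝ} (hs : 0 ≤ s) {gu gv du dv G u₁ σ : ℝ → ℝ}
    (hgu : ∀ t ∈ Icc 0 s, HasDerivWithinAt gu (du t) (Icc 0 s) t)
    (hgv : ∀ t ∈ Icc 0 s, HasDerivWithinAt gv (dv t) (Icc 0 s) t)
    (hdv : ∀ t ∈ Icc 0 s, 0 < dv t)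
    (hdvc : ContinuousOn dv (Icc 0 s))
    (hG : ∀ t ∈ Icc 0 s,
      HasDerivWithinAt G (h (gu t) (gv t) * dv t) (Icc 0 s) t)
    (hmem : ∀ t ∈ Icc 0 s, (gu t, gv t) ∈ Udom)
    (hσ : ∀ w ∈ Icc (gv 0) (gv s), σ w ∈ Icc (0 : ℝ) s ∧ gv (σ w) = w)
    (hreg : ∀ w ∈ Icc (gv 0) (gv s), ∀ x ∈ Icc (u₁ w) (gu (σ w)), (x, w) ∈ Udom)
    (hle : ∀ w ∈ Icc (gv 0) (gv s), u₁ w ≤ gu (σ w))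
    (hu₁c : Continuous u₁) :
    G s - G 0 = (∫ w in (gv 0)..(gv s), ∫ x in (u₁ w)..(gu (σ w)), F x w) +
      ∫ w in (gv 0)..(gv s), h (u₁ w) w := by
  have h0s : (0 : ℝ) ∈ Icc (0 : ℝ) s := ⟨le_refl _, hs⟩
  have hss : s ∈ Icc (0 : ℝ) s := ⟨hs, le_refl _⟩
  have hgvc : ContinuousOn gv (Icc 0 s) := fun t ht => (hgv t ht).continuousWithinAt
  have hguc : ContinuousOn gu (Icc 0 s) := fun t ht => (hgu t ht).continuousWithinAt
  have hGc : ContinuousOn G (Icc 0 s) := fun t ht => (hG t ht).continuousWithinAt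
  -- strict monotonicity of gv
  have hmono : StrictMonoOn gv (Icc 0 s) := by
    refine strictMonoOn_of_hasDerivWithinAt_pos (convex_Icc 0 s) hgvc
      (f' := dv) (fun x hx => ?_) (fun x hx => ?_)
    · rw [interior_Icc] at hx ⊢
      exact (hgv x (Ioo_subset_Icc_self hx)).mono Ioo_subset_Icc_self
    · rw [interior_Icc] at hx
      exact hdv x (Ioo_subset_Icc_self hx)
  have hb : gv 0 ≤ gv s := hmono.monotoneOn h0s hss hs
  have hmapsTo : ∀ t ∈ Icc (0 : ℝ) s, gv t ∈ Icc (gv 0) (gv s) := fun t ht =>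
    ⟨hmono.monotoneOn h0s ht ht.1, hmono.monotoneOn ht hss ht.2⟩
  have hσgv : ∀ t ∈ Icc (0 : ℝ) s, σ (gv t) = t := by
    intro t ht
    have h1 := hσ (gv t) (hmapsTo t ht)
    exact hmono.injOn h1.1 ht h1.2
  -- continuity of σ on [gv 0, gv s]
  have hσcont : ContinuousOn σ (Icc (gv 0) (gv s)) := by
    haveI : CompactSpace (Icc (0 : ℝ) s) := isCompact_iff_compactSpace.mp isCompact_Icc
    let e : Icc (0 : ℝ) s ≃ Icc (gv 0) (gv s) :=
      { toFun := fun t => ⟨gv t, hmapsTo t t.2⟩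
        invFun := fun w => ⟨σ w, (hσ w w.2).1⟩
        left_inv := fun t => Subtype.ext (hσgv t t.2)
        right_inv := fun w => Subtype.ext ((hσ w w.2).2) }
    have hec : Continuous (e : Icc (0 : ℝ) s → Icc (gv 0) (gv s)) := by
      apply Continuous.subtype_mk
      exact continuousOn_iff_continuous_restrict.mp hgvc
    have := (Continuous.homeoOfEquivCompactToT2 (f := e) hec).symm.continuous
    rw [continuousOn_iff_continuous_restrict]
    exact continuous_subtype_val.comp this
  -- the curve and composite continuity
  have hγc : ContinuousOn (fun t => h (gu t) (gv t)) (Icc 0 s) :=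
    hhc.comp (hguc.prodMk hgvc) hmem
  have hAc : ContinuousOn (fun w => h (gu (σ w)) w) (Icc (gv 0) (gv s)) := by
    have : ContinuousOn (fun w => h (gu (σ w)) (gv (σ w))) (Icc (gv 0) (gv s)) :=
      hγc.comp hσcont (fun w hw => (hσ w hw).1)
    exact this.congr (fun w hw => by beta_reduce; rw [(hσ w hw).2])
  have hBc : ContinuousOn (fun w => h (u₁ w) w) (Icc (gv 0) (gv s)) :=
    hhc.comp ((hu₁c.continuousOn).prodMk continuousOn_id)
      (fun w hw => hreg w hw (u₁ w) ⟨le_refl _, hle w hw⟩)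
  -- Step 1 : FTC along the curve
  have step1 : (∫ t in (0 : ℝ)..s, h (gu t) (gv t) * dv t) = G s - G 0 := by
    refine intervalIntegral.integral_eq_sub_of_hasDeriv_right_of_le hs hGc
      (fun t ht => ?_) ?_
    · exact (((hG t (Ioo_subset_Icc_self ht)).hasDerivAt
        (Icc_mem_nhds ht.1 ht.2)).hasDerivWithinAt)
    · exact (hγc.mul hdvc).intervalIntegrable_of_Icc hs
  -- Step 2 : change of variables
  have step2 : (∫ t in (0 : ℝ)..s, h (gu t) (gv t) * dv t) =
      ∫ w in (gv 0)..(gv s), h (gu (σ w)) w := by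
    have huIcc : uIcc (0 : ℝ) s = Icc 0 s := uIcc_of_le hs
    have hcv := intervalIntegral.integral_comp_smul_deriv'' (f := gv) (f' := dv)
      (g := fun w => h (gu (σ w)) w) (a := 0) (b := s)
      (by rw [huIcc]; exact hgvc)
      (fun x hx => by
        rw [min_eq_left hs, max_eq_right hs] at hx
        exact ((hgv x (Ioo_subset_Icc_self hx)).hasDerivAt
          (Icc_mem_nhds hx.1 hx.2)).hasDerivWithinAt)
      (by rw [huIcc]; exact hdvc)
      (by
        refine hAc.mono ?_
        rw [huIcc]
        intro y hy
        obtain ⟨t, ht, rfl⟩ := hy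
        exact hmapsTo t ht)
    rw [← hcv]
    refine intervalIntegral.integral_congr (fun t ht => ?_)
    rw [huIcc] at ht
    simp only [Function.comp, smul_eq_mul, hσgv t ht]
    ring
  -- Step 3 : inner FTC
  have step3 : ∀ w ∈ Icc (gv 0) (gv s),
      (∫ x in (u₁ w)..(gu (σ w)), F x w) = h (gu (σ w)) w - h (u₁ w) w := by
    intro w hw
    have huIcc2 : uIcc (u₁ w) (gu (σ w)) = Icc (u₁ w) (gu (σ w)) :=
      uIcc_of_le (hle w hw)
    refine intervalIntegral.integral_eq_sub_of_hasDerivAt (f := fun x => h x w) (fun x hx => ?_) ?_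
    · rw [huIcc2] at hx
      exact hder (x, w) (hreg w hw x hx)
    · refine ContinuousOn.intervalIntegrable ?_
      rw [huIcc2]
      refine hFc.comp ?_ (fun x hx => hreg w hw x hx)
      exact (continuous_id.prodMk continuous_const).continuousOn
  -- combine
  have hIcc1 : uIcc (gv 0) (gv s) = Icc (gv 0) (gv s) := uIcc_of_le hb
  have hAint : IntervalIntegrable (fun w => h (gu (σ w)) w) volume (gv 0) (gv s) := by
    refine ContinuousOn.intervalIntegrable ?_; rw [hIcc1]; exact hAc
  have hBint : IntervalIntegrable (fun w => h (u₁ w) w) volume (gv 0) (gv s) := by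
    refine ContinuousOn.intervalIntegrable ?_; rw [hIcc1]; exact hBc
  have hsplit : (∫ w in (gv 0)..(gv s), ∫ x in (u₁ w)..(gu (σ w)), F x w) =
      (∫ w in (gv 0)..(gv s), h (gu (σ w)) w) -
        ∫ w in (gv 0)..(gv s), h (u₁ w) w := by
    rw [← intervalIntegral.integral_sub hAint hBint]
    refine intervalIntegral.integral_congr (fun w hw => ?_)
    rw [hIcc1] at hw
    exact step3 w hw
  rw [hsplit, ← step1, step2]
  ring

end KeyIdentity

section Einstein
variable {Λ : ℝ} {Udom : Set (ℝ × ℝ)} {r Ω2 T : ℝ → ℝ → ℝ}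

lemma einstein_hasDerivAt (hU : IsOpen Udom)
    (hrpos : ∀ p ∈ Udom, 0 < r p.1 p.2) (hΩpos : ∀ p ∈ Udom, 0 < Ω2 p.1 p.2)
    (hrsm : ContDiffOn ℝ (⊤ : ℕ∞) (fun p : ℝ × ℝ => r p.1 p.2) Udom)
    (hΩsm : ContDiffOn ℝ (⊤ : ℕ∞) (fun p : ℝ × ℝ => Ω2 p.1 p.2) Udom)
    (waveR : ∀ p ∈ Udom,
      pdu (fun a b => pdv (fun x y => (r x y) ^ 2) a b) p.1 p.2 =
        -(1 / 2) * (1 - Λ * (r p.1 p.2) ^ 2) * Ω2 p.1 p.2 +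
          8 * π * (r p.1 p.2) ^ 2 * T p.1 p.2)
    (waveΩ : ∀ p ∈ Udom,
      pdu (fun a b => pdv (fun x y => Real.log (Ω2 x y)) a b) p.1 p.2 =
        Ω2 p.1 p.2 / (2 * (r p.1 p.2) ^ 2) *
            (1 + 4 * (Ω2 p.1 p.2)⁻¹ * pdu r p.1 p.2 * pdv r p.1 p.2) -
          16 * π * T p.1 p.2) :
    ∀ p ∈ Udom, HasDerivAt
      (fun x => pdv (fun a b => Real.log (Ω2 a b)) x p.2 -
        2 * pdv r x p.2 / r x p.2)
      (1 / 2 * ((6 * hawkRen Λ r Ω2 p.1 p.2 / r p.1 p.2 - 1) / (r p.1 p.2) ^ 2) *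
          Ω2 p.1 p.2 - 24 * π * T p.1 p.2) p.1 := by
  have hLsm : ContDiffOn ℝ (⊤ : ℕ∞)
      (fun p : ℝ × ℝ => Real.log (Ω2 p.1 p.2)) Udom :=
    hΩsm.log (fun p hp => (hΩpos p hp).ne')
  rintro ⟨u, v⟩ hp
  have hrne : r u v ≠ 0 := (hrpos (u, v) hp).ne'
  have hΩne : Ω2 u v ≠ 0 := (hΩpos (u, v) hp).ne'
  have h1 : HasDerivAt (fun x => pdv (fun a b => Real.log (Ω2 a b)) x v)
      (pdu (fun a b => pdv (fun a b => Real.log (Ω2 a b)) a b) u v) u :=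
    hasDerivAt_pdu_pdv hU hLsm hp
  have h2 : HasDerivAt (fun x => pdv r x v) (pdu (fun a b => pdv r a b) u v) u :=
    hasDerivAt_pdu_pdv hU hrsm hp
  have h3 : HasDerivAt (fun x => r x v) (pdu r u v) u := hasDerivAt_pdu hU hrsm hp
  have H := h1.sub ((h2.const_mul (2 : ℝ)).div h3 hrne)
  -- compute pdu (pdv r²)
  have hpv2 : ∀ q ∈ Udom, pdv (fun x y => (r x y) ^ 2) q.1 q.2 =
      2 * (r q.1 q.2 * pdv r q.1 q.2) := by
    rintro ⟨a, b⟩ hq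
    have h := ((hasDerivAt_pdv hU hrsm hq).pow 2).deriv
    simpa [pdv, pow_one, mul_assoc, Pi.pow_def] using h
  have hnb : {x : ℝ | (x, v) ∈ Udom} ∈ 𝓝 u :=
    (hU.preimage (continuous_id.prodMk continuous_const)).mem_nhds hp
  have hev : (fun x => pdv (fun x y => (r x y) ^ 2) x v) =ᶠ[𝓝 u]
      (fun x => 2 * (r x v * pdv r x v)) := by
    filter_upwards [hnb] with x hx using hpv2 (x, v) hx
  have hmix : HasDerivAt (fun x => pdv (fun x y => (r x y) ^ 2) x v)
      (2 * (pdu r u v * pdv r u v + r u v * pdu (fun a b => pdv r a b) u v)) u :=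
    HasDerivAt.congr_of_eventuallyEq ((h3.mul h2).const_mul (2 : ℝ)) hev
  have hDval : pdu (fun a b => pdv (fun x y => (r x y) ^ 2) a b) u v =
      2 * (pdu r u v * pdv r u v + r u v * pdu (fun a b => pdv r a b) u v) :=
    hmix.deriv
  have hwr := waveR (u, v) hp
  have hwΩ := waveΩ (u, v) hp
  rw [hDval] at hwr
  have hD : pdu (fun a b => pdv r a b) u v =
      (-(1 / 2) * (1 - Λ * (r u v) ^ 2) * Ω2 u v + 8 * π * (r u v) ^ 2 * T u v -
        2 * (pdu r u v * pdv r u v)) / (2 * r u v) := by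
    field_simp
    linarith [hwr]
  have hval : pdu (fun a b => pdv (fun a b => Real.log (Ω2 a b)) a b) u v -
      (2 * pdu (fun a b => pdv r a b) u v * r u v -
        2 * pdv r u v * pdu r u v) / (r u v) ^ 2 =
      1 / 2 * ((6 * hawkRen Λ r Ω2 u v / r u v - 1) / (r u v) ^ 2) * Ω2 u v -
        24 * π * T u v := by
    rw [hwΩ, hD]
    simp only [hawkRen, hawk]
    field_simp
    ring
  rw [← hval]
  exact H


lemma einstein_hcont (hU : IsOpen Udom)
    (hrpos : ∀ p ∈ Udom, 0 < r p.1 p.2) (hΩpos : ∀ p ∈ Udom, 0 < Ω2 p.1 p.2)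
    (hrsm : ContDiffOn ℝ (⊤ : ℕ∞) (fun p : ℝ × ℝ => r p.1 p.2) Udom)
    (hΩsm : ContDiffOn ℝ (⊤ : ℕ∞) (fun p : ℝ × ℝ => Ω2 p.1 p.2) Udom) :
    ContinuousOn (fun p : ℝ × ℝ =>
      pdv (fun a b => Real.log (Ω2 a b)) p.1 p.2 -
        2 * pdv r p.1 p.2 / r p.1 p.2) Udom := by
  have hLsm : ContDiffOn ℝ (⊤ : ℕ∞)
      (fun p : ℝ × ℝ => Real.log (Ω2 p.1 p.2)) Udom :=
    hΩsm.log (fun p hp => (hΩpos p hp).ne')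
  exact (continuousOn_pdv hU hLsm).sub
    (((continuousOn_pdv hU hrsm).const_smul (2 : ℝ)).div hrsm.continuousOn
      (fun p hp => (hrpos p hp).ne'))

lemma einstein_Tcont (hU : IsOpen Udom)
    (hrpos : ∀ p ∈ Udom, 0 < r p.1 p.2) (hΩpos : ∀ p ∈ Udom, 0 < Ω2 p.1 p.2)
    (hrsm : ContDiffOn ℝ (⊤ : ℕ∞) (fun p : ℝ × ℝ => r p.1 p.2) Udom)
    (hΩsm : ContDiffOn ℝ (⊤ : ℕ∞) (fun p : ℝ × ℝ => Ω2 p.1 p.2) Udom)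
    (waveΩ : ∀ p ∈ Udom,
      pdu (fun a b => pdv (fun x y => Real.log (Ω2 x y)) a b) p.1 p.2 =
        Ω2 p.1 p.2 / (2 * (r p.1 p.2) ^ 2) *
            (1 + 4 * (Ω2 p.1 p.2)⁻¹ * pdu r p.1 p.2 * pdv r p.1 p.2) -
          16 * π * T p.1 p.2) :
    ContinuousOn (fun p : ℝ × ℝ => T p.1 p.2) Udom := by
  have hLsm : ContDiffOn ℝ (⊤ : ℕ∞)
      (fun p : ℝ × ℝ => Real.log (Ω2 p.1 p.2)) Udom :=
    hΩsm.log (fun p hp => (hΩpos p hp).ne')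
  have hc : ContinuousOn (fun p : ℝ × ℝ =>
      (Ω2 p.1 p.2 / (2 * (r p.1 p.2) ^ 2) *
          (1 + 4 * (Ω2 p.1 p.2)⁻¹ * pdu r p.1 p.2 * pdv r p.1 p.2) -
        pdu (fun a b => pdv (fun x y => Real.log (Ω2 x y)) a b) p.1 p.2) /
        (16 * π)) Udom := by
    refine ContinuousOn.div ?_ continuousOn_const
      (fun p _ => by positivity)
    refine ContinuousOn.sub ?_ (continuousOn_pdu_pdv hU hLsm)
    refine ContinuousOn.mul (ContinuousOn.div hΩsm.continuousOn
      (continuousOn_const.mul (hrsm.continuousOn.pow 2))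
      (fun p hp => by
        have := hrpos p hp
        positivity)) ?_
    exact continuousOn_const.add
      (((continuousOn_const.mul ((hΩsm.continuousOn).inv₀
          (fun p hp => (hΩpos p hp).ne'))).mul
        (continuousOn_pdu hU hrsm)).mul (continuousOn_pdv hU hrsm))
  refine hc.congr (fun p hp => ?_)
  have h := waveΩ p hp
  have hπ : (16 : ℝ) * π ≠ 0 := by positivity
  beta_reduce
  rw [h]
  field_simp
  ring

lemma einstein_Fcont (hU : IsOpen Udom)
    (hrpos : ∀ p ∈ Udom, 0 < r p.1 p.2) (hΩpos : ∀ p ∈ Udom, 0 < Ω2 p.1 p.2)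
    (hrsm : ContDiffOn ℝ (⊤ : ℕ∞) (fun p : ℝ × ℝ => r p.1 p.2) Udom)
    (hΩsm : ContDiffOn ℝ (⊤ : ℕ∞) (fun p : ℝ × ℝ => Ω2 p.1 p.2) Udom)
    (hT : ContinuousOn (fun p : ℝ × ℝ => T p.1 p.2) Udom) :
    ContinuousOn (fun p : ℝ × ℝ =>
      1 / 2 * ((6 * hawkRen Λ r Ω2 p.1 p.2 / r p.1 p.2 - 1) / (r p.1 p.2) ^ 2) *
          Ω2 p.1 p.2 - 24 * π * T p.1 p.2) Udom := by
  have hrne : ∀ p ∈ Udom, r p.1 p.2 ≠ 0 := fun p hp => (hrpos p hp).ne'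
  have hhawk : ContinuousOn (fun p : ℝ × ℝ => hawkRen Λ r Ω2 p.1 p.2) Udom := by
    simp only [hawkRen, hawk]
    refine ContinuousOn.sub ?_
      ((continuousOn_const.mul continuousOn_const).mul (hrsm.continuousOn.pow 3))
    refine ContinuousOn.mul (hrsm.continuousOn.div continuousOn_const
      (fun _ _ => two_ne_zero)) ?_
    exact continuousOn_const.add
      (((continuousOn_const.mul ((hΩsm.continuousOn).inv₀
          (fun p hp => (hΩpos p hp).ne'))).mul
        (continuousOn_pdu hU hrsm)).mul (continuousOn_pdv hU hrsm))
  refine ContinuousOn.sub ?_ (continuousOn_const.mul hT)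
  refine ContinuousOn.mul (continuousOn_const.mul ?_) hΩsm.continuousOn
  exact ContinuousOn.div
    (((continuousOn_const.mul hhawk).div hrsm.continuousOn hrne).sub
      continuousOn_const)
    (hrsm.continuousOn.pow 2)
    (fun p hp => pow_ne_zero 2 (hrne p hp))


lemma half_identity (hU : IsOpen Udom)
    (hrpos : ∀ p ∈ Udom, 0 < r p.1 p.2) (hΩpos : ∀ p ∈ Udom, 0 < Ω2 p.1 p.2)
    (hrsm : ContDiffOn ℝ (⊤ : ℕ∞) (fun p : ℝ × ℝ => r p.1 p.2) Udom)
    (hΩsm : ContDiffOn ℝ (⊤ : ℕ∞) (fun p : ℝ × ℝ => Ω2 p.1 p.2) Udom)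
    (waveR : ∀ p ∈ Udom,
      pdu (fun a b => pdv (fun x y => (r x y) ^ 2) a b) p.1 p.2 =
        -(1 / 2) * (1 - Λ * (r p.1 p.2) ^ 2) * Ω2 p.1 p.2 +
          8 * π * (r p.1 p.2) ^ 2 * T p.1 p.2)
    (waveΩ : ∀ p ∈ Udom,
      pdu (fun a b => pdv (fun x y => Real.log (Ω2 x y)) a b) p.1 p.2 =
        Ω2 p.1 p.2 / (2 * (r p.1 p.2) ^ 2) *
            (1 + 4 * (Ω2 p.1 p.2)⁻¹ * pdu r p.1 p.2 * pdv r p.1 p.2) -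
          16 * π * T p.1 p.2)
    (u₁ : ℝ → ℝ) (hu₁ : Continuous u₁)
    (s : ℝ) (hs : 0 ≤ s) (gu gv du dv : ℝ → ℝ) (l : ℝ)
    (hmem : ∀ t ∈ Icc 0 s, (gu t, gv t) ∈ Udom)
    (hdu_pos : ∀ t ∈ Icc 0 s, 0 < du t)
    (hdv_pos : ∀ t ∈ Icc 0 s, 0 < dv t)
    (hdvc : ContinuousOn dv (Icc 0 s))
    (hgu : ∀ t ∈ Icc 0 s, HasDerivWithinAt gu (du t) (Icc 0 s) t)
    (hgv : ∀ t ∈ Icc 0 s, HasDerivWithinAt gv (dv t) (Icc 0 s) t)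
    (hshell : ∀ t ∈ Icc 0 s,
      Ω2 (gu t) (gv t) * du t * dv t = l ^ 2 / (r (gu t) (gv t)) ^ 2)
    (hgeo : ∀ t ∈ Icc 0 s, HasDerivWithinAt (fun t => Ω2 (gu t) (gv t) * du t)
      ((pdv (fun a b => Real.log (Ω2 a b)) (gu t) (gv t)
          - 2 * pdv r (gu t) (gv t) / r (gu t) (gv t)) *
        (l ^ 2 / (r (gu t) (gv t)) ^ 2)) (Icc 0 s) t)
    (σ : ℝ → ℝ)
    (hσ : ∀ w ∈ Icc (gv 0) (gv s), σ w ∈ Icc (0 : ℝ) s ∧ gv (σ w) = w)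
    (hreg : ∀ w ∈ Icc (gv 0) (gv s), ∀ x ∈ Icc (u₁ w) (gu (σ w)), (x, w) ∈ Udom)
    (hle : ∀ w ∈ Icc (gv 0) (gv s), u₁ w ≤ gu (σ w)) :
    Real.log (Ω2 (gu s) (gv s) * du s) - Real.log (Ω2 (gu 0) (gv 0) * du 0) =
      (∫ w in (gv 0)..(gv s), ∫ x in (u₁ w)..(gu (σ w)),
        (1 / 2 * ((6 * hawkRen Λ r Ω2 x w / r x w - 1) / (r x w) ^ 2) * Ω2 x w -
          24 * π * T x w)) +
      ∫ w in (gv 0)..(gv s),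
        (pdv (fun c d => Real.log (Ω2 c d)) (u₁ w) w -
          2 * pdv r (u₁ w) w / r (u₁ w) w) := by
  have hG : ∀ t ∈ Icc 0 s,
      HasDerivWithinAt (fun t => Real.log (Ω2 (gu t) (gv t) * du t))
        ((pdv (fun a b => Real.log (Ω2 a b)) (gu t) (gv t) -
          2 * pdv r (gu t) (gv t) / r (gu t) (gv t)) * dv t) (Icc 0 s) t := by
    intro t ht
    have hpos : 0 < Ω2 (gu t) (gv t) * du t :=
      mul_pos (hΩpos _ (hmem t ht)) (hdu_pos t ht)
    have hE := (hgeo t ht).log hpos.ne'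
    have heq : (pdv (fun a b => Real.log (Ω2 a b)) (gu t) (gv t) -
          2 * pdv r (gu t) (gv t) / r (gu t) (gv t)) *
          (l ^ 2 / (r (gu t) (gv t)) ^ 2) / (Ω2 (gu t) (gv t) * du t) =
        (pdv (fun a b => Real.log (Ω2 a b)) (gu t) (gv t) -
          2 * pdv r (gu t) (gv t) / r (gu t) (gv t)) * dv t := by
      rw [← hshell t ht]
      have hΩ0 := (hΩpos _ (hmem t ht)).ne'
      have hdu0 := (hdu_pos t ht).ne'
      have hr0 := (hrpos _ (hmem t ht)).ne'
      field_simp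
    rw [heq] at hE
    exact hE
  exact key_identity (h := fun x w => pdv (fun a b => Real.log (Ω2 a b)) x w -
      2 * pdv r x w / r x w)
    (F := fun x w => 1 / 2 * ((6 * hawkRen Λ r Ω2 x w / r x w - 1) / (r x w) ^ 2) *
      Ω2 x w - 24 * π * T x w)
    (einstein_hcont hU hrpos hΩpos hrsm hΩsm)
    (einstein_hasDerivAt hU hrpos hΩpos hrsm hΩsm waveR waveΩ)
    (einstein_Fcont hU hrpos hΩpos hrsm hΩsm
      (einstein_Tcont hU hrpos hΩpos hrsm hΩsm waveΩ))
    hs hgu hgv hdv_pos hdvc hG hmem hσ hreg hle hu₁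


end Einstein

set_option maxHeartbeats 1000000 in
/-- **Integral identities for the change of `log(Ω²γ̇ᵘ)` and `log(Ω²γ̇ᵛ)` along null
geodesics** (identities (5.6)–(5.7) of Moschidis, *A proof of the instability of AdS for
the Einstein–massless Vlasov system*). -/
theorem geodesic_log_momentum_integral_identity :
    (∀ (Λ : ℝ), Λ < 0 → ∀ Udom : Set (ℝ × ℝ), IsOpen Udom →
      ∀ (r Ω2 : ℝ → ℝ → ℝ) (fbar : ℝ → ℝ → ℝ → ℝ → ℝ → ℝ),
        EinsteinVlasov Λ Udom r Ω2 fbar →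
        ∀ u₁ : ℝ → ℝ, ContDiff ℝ 1 u₁ →
        ∀ (a : EReal) (gu gv du dv : ℝ → ℝ) (l : ℝ),
          NullGeodesic Udom r Ω2 (IcoE a) gu gv du dv l →
          (∀ t ∈ IcoE a, u₁ (gv t) ≤ gu t) →
          gu 0 = u₁ (gv 0) →
          ∀ s ∈ IcoE a, ∀ σ : ℝ → ℝ,
            (∀ w ∈ Icc (gv 0) (gv s), σ w ∈ Icc (0 : ℝ) s ∧ gv (σ w) = w) →
            (∀ w ∈ Icc (gv 0) (gv s), ∀ x ∈ Icc (u₁ w) (gu (σ w)), (x, w) ∈ Udom) →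
            Real.log (Ω2 (gu s) (gv s) * du s) -
                Real.log (Ω2 (gu 0) (gv 0) * du 0) =
              (∫ w in (gv 0)..(gv s),
                ∫ x in (u₁ w)..(gu (σ w)),
                  (1 / 2 * ((6 * hawkRen Λ r Ω2 x w / r x w - 1) / (r x w) ^ 2) *
                      Ω2 x w -
                    24 * π * Tuv r Ω2 fbar x w)) +
                ∫ w in (gv 0)..(gv s),
                  (pdv (fun c d => Real.log (Ω2 c d)) (u₁ w) w -
                    2 * pdv r (u₁ w) w / r (u₁ w) w)) ∧
    (∀ (Λ : ℝ), Λ < 0 → ∀ Udom : Set (ℝ × ℝ), IsOpen Udom →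
      ∀ (r Ω2 : ℝ → ℝ → ℝ) (fbar : ℝ → ℝ → ℝ → ℝ → ℝ → ℝ),
        EinsteinVlasov Λ Udom r Ω2 fbar →
        ∀ v₁ : ℝ → ℝ, ContDiff ℝ 1 v₁ →
        ∀ (a : EReal) (gu gv du dv : ℝ → ℝ) (l : ℝ),
          NullGeodesic Udom r Ω2 (IcoE a) gu gv du dv l →
          (∀ t ∈ IcoE a, v₁ (gu t) ≤ gv t) →
          gv 0 = v₁ (gu 0) →
          ∀ s ∈ IcoE a, ∀ σ : ℝ → ℝ,
            (∀ x ∈ Icc (gu 0) (gu s), σ x ∈ Icc (0 : ℝ) s ∧ gu (σ x) = x) →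
            (∀ x ∈ Icc (gu 0) (gu s), ∀ w ∈ Icc (v₁ x) (gv (σ x)), (x, w) ∈ Udom) →
            Real.log (Ω2 (gu s) (gv s) * dv s) -
                Real.log (Ω2 (gu 0) (gv 0) * dv 0) =
              (∫ x in (gu 0)..(gu s),
                ∫ w in (v₁ x)..(gv (σ x)),
                  (1 / 2 * ((6 * hawkRen Λ r Ω2 x w / r x w - 1) / (r x w) ^ 2) *
                      Ω2 x w -
                    24 * π * Tuv r Ω2 fbar x w)) +
                ∫ x in (gu 0)..(gu s),
                  (pdu (fun c d => Real.log (Ω2 c d)) x (v₁ x) -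
                    2 * pdu r x (v₁ x) / r x (v₁ x))) := by
  constructor
  · intro Λ hΛ Udom hUopen r Ω2 fbar EV u₁ hu₁ a gu gv du dv l geo hub h0 s hsmem σ hσ hreg
    have hsub : Icc (0 : ℝ) s ⊆ IcoE a := fun t ht =>
      ⟨ht.1, lt_of_le_of_lt (EReal.coe_le_coe_iff.mpr ht.2) hsmem.2⟩
    have hle : ∀ w ∈ Icc (gv 0) (gv s), u₁ w ≤ gu (σ w) := by
      intro w hw
      have h1 := hσ w hw
      have h2 := hub (σ w) (hsub h1.1)
      rwa [h1.2] at h2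
    exact half_identity hUopen EV.field.r_pos EV.field.Ω2_pos EV.field.r_smooth
      EV.field.Ω2_smooth EV.wave_r EV.wave_Ω u₁ hu₁.continuous s hsmem.1 gu gv du dv l
      (fun t ht => geo.mem t (hsub ht))
      (fun t ht => geo.du_pos t (hsub ht))
      (fun t ht => geo.dv_pos t (hsub ht))
      (geo.dv_cont.mono hsub)
      (fun t ht => (geo.deriv_u t (hsub ht)).mono hsub)
      (fun t ht => (geo.deriv_v t (hsub ht)).mono hsub)
      (fun t ht => geo.shell t (hsub ht))
      (fun t ht => (geo.geo_u t (hsub ht)).mono hsub)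
      σ hσ hreg hle
  · intro Λ hΛ Udom hUopen r Ω2 fbar EV v₁ hv₁ a gu gv du dv l geo hvb h0 s hsmem σ hσ hreg
    have hsub : Icc (0 : ℝ) s ⊆ IcoE a := fun t ht =>
      ⟨ht.1, lt_of_le_of_lt (EReal.coe_le_coe_iff.mpr ht.2) hsmem.2⟩
    have hle : ∀ x ∈ Icc (gu 0) (gu s), v₁ x ≤ gv (σ x) := by
      intro x hx
      have h1 := hσ x hx
      have h2 := hvb (σ x) (hsub h1.1)
      rwa [h1.2] at h2
    -- swapped data
    have hU' : IsOpen {p : ℝ × ℝ | (p.2, p.1) ∈ Udom} :=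
      hUopen.preimage (continuous_snd.prodMk continuous_fst)
    have hr'sm : ContDiffOn ℝ (⊤ : ℕ∞)
        (fun p : ℝ × ℝ => r p.2 p.1) {p : ℝ × ℝ | (p.2, p.1) ∈ Udom} :=
      EV.field.r_smooth.comp (contDiff_snd.prodMk contDiff_fst).contDiffOn
        (fun p hp => hp)
    have hΩ'sm : ContDiffOn ℝ (⊤ : ℕ∞)
        (fun p : ℝ × ℝ => Ω2 p.2 p.1) {p : ℝ × ℝ | (p.2, p.1) ∈ Udom} :=
      EV.field.Ω2_smooth.comp (contDiff_snd.prodMk contDiff_fst).contDiffOn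
        (fun p hp => hp)
    have hr2sm : ContDiffOn ℝ (⊤ : ℕ∞)
        (fun p : ℝ × ℝ => (r p.1 p.2) ^ 2) Udom := EV.field.r_smooth.pow 2
    have hLsm : ContDiffOn ℝ (⊤ : ℕ∞)
        (fun p : ℝ × ℝ => Real.log (Ω2 p.1 p.2)) Udom :=
      EV.field.Ω2_smooth.log (fun p hp => (EV.field.Ω2_pos p hp).ne')
    have waveR' : ∀ p ∈ {p : ℝ × ℝ | (p.2, p.1) ∈ Udom},
        pdu (fun a b => pdv (fun x y => ((fun c d => r d c) x y) ^ 2) a b) p.1 p.2 =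
          -(1 / 2) * (1 - Λ * (r p.2 p.1) ^ 2) * Ω2 p.2 p.1 +
            8 * π * (r p.2 p.1) ^ 2 * Tuv r Ω2 fbar p.2 p.1 := by
      intro p hp
      show pdv (fun a b => pdu (fun x y => (r x y) ^ 2) a b) p.2 p.1 = _
      rw [← pd_comm hUopen hr2sm hp]
      exact EV.wave_r (p.2, p.1) hp
    have waveΩ' : ∀ p ∈ {p : ℝ × ℝ | (p.2, p.1) ∈ Udom},
        pdu (fun a b => pdv (fun x y => Real.log ((fun c d => Ω2 d c) x y)) a b)
            p.1 p.2 =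
          Ω2 p.2 p.1 / (2 * (r p.2 p.1) ^ 2) *
              (1 + 4 * (Ω2 p.2 p.1)⁻¹ * pdu (fun c d => r d c) p.1 p.2 *
                pdv (fun c d => r d c) p.1 p.2) -
            16 * π * Tuv r Ω2 fbar p.2 p.1 := by
      intro p hp
      have e1 : pdu (fun c d => r d c) p.1 p.2 = pdv r p.2 p.1 := rfl
      have e2 : pdv (fun c d => r d c) p.1 p.2 = pdu r p.2 p.1 := rfl
      rw [e1, e2]
      have hw : pdu (fun a b => pdv (fun x y => Real.log (Ω2 x y)) a b) p.2 p.1 =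
          Ω2 p.2 p.1 / (2 * (r p.2 p.1) ^ 2) *
              (1 + 4 * (Ω2 p.2 p.1)⁻¹ * pdu r p.2 p.1 * pdv r p.2 p.1) -
            16 * π * Tuv r Ω2 fbar p.2 p.1 := EV.wave_Ω (p.2, p.1) hp
      show pdv (fun a b => pdu (fun x y => Real.log (Ω2 x y)) a b) p.2 p.1 = _
      rw [← pd_comm hUopen hLsm hp, hw]
      ring
    have hmain := half_identity (Λ := Λ) (Udom := {p : ℝ × ℝ | (p.2, p.1) ∈ Udom})
      (r := fun c d => r d c) (Ω2 := fun c d => Ω2 d c)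
      (T := fun a b => Tuv r Ω2 fbar b a)
      hU'
      (fun p hp => EV.field.r_pos (p.2, p.1) hp)
      (fun p hp => EV.field.Ω2_pos (p.2, p.1) hp)
      hr'sm hΩ'sm waveR' waveΩ' v₁ hv₁.continuous s hsmem.1 gv gu dv du l
      (fun t ht => geo.mem t (hsub ht))
      (fun t ht => geo.dv_pos t (hsub ht))
      (fun t ht => geo.du_pos t (hsub ht))
      (geo.du_cont.mono hsub)
      (fun t ht => (geo.deriv_v t (hsub ht)).mono hsub)
      (fun t ht => (geo.deriv_u t (hsub ht)).mono hsub)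
      (fun t ht => by
        show Ω2 (gu t) (gv t) * dv t * du t = l ^ 2 / (r (gu t) (gv t)) ^ 2
        rw [mul_right_comm]
        exact geo.shell t (hsub ht))
      (fun t ht => (geo.geo_v t (hsub ht)).mono hsub)
      σ hσ hreg hle
    have hswap : ∀ a b : ℝ,
        hawkRen Λ (fun c d => r d c) (fun c d => Ω2 d c) a b = hawkRen Λ r Ω2 b a := by
      intro a b
      simp only [hawkRen, hawk]
      have e1 : pdu (fun c d => r d c) a b = pdv r b a := rfl
      have e2 : pdv (fun c d => r d c) a b = pdu r b a := rfl
      rw [e1, e2]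
      ring
    have hI1 : (∫ x in (gu 0)..(gu s), ∫ w in (v₁ x)..(gv (σ x)),
        (1 / 2 * ((6 * hawkRen Λ r Ω2 x w / r x w - 1) / (r x w) ^ 2) * Ω2 x w -
          24 * π * Tuv r Ω2 fbar x w)) =
        ∫ x in (gu 0)..(gu s), ∫ w in (v₁ x)..(gv (σ x)),
          (1 / 2 * ((6 * hawkRen Λ (fun c d => r d c) (fun c d => Ω2 d c) w x /
              r x w - 1) / (r x w) ^ 2) * Ω2 x w -
            24 * π * Tuv r Ω2 fbar x w) := by
      refine intervalIntegral.integral_congr (fun x _ => ?_)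
      refine intervalIntegral.integral_congr (fun w _ => ?_)
      rw [hswap w x]
    rw [hI1]
    exact hmain

end
end

section
/- Let 𝒰 ⊆ ℝ² be open, let r, Ω² : 𝒰 → (0,∞) be smooth, and let f̄ be a smooth nonnegative function on 𝒰 × (0,∞)³, compactly supported in momentum locally uniformly. Fix (u,v) ∈ 𝒰 with ∂_u r(u,v) < 0 < ∂_v r(u,v) and 2m/r(u,v) < 1, and set S := sup{ ∂_v r(u,v)·p^v − ∂_u r(u,v)·p^u : (p^u,p^v,l) belongs to the support of f̄(u,v;·,·,·) and Ω²p^u p^v = l²/r² }. Then at (u,v): ((1 − 2m/r)/∂_v r)·T_vv + ((1 − 2m/r)/(−∂_u r))·T_uv ≤ 2·S·N_v and ((1 − 2m/r)/∂_v r)·T_uv + ((1 − 2m/r)/(−∂_u r))·T_uu ≤ 2·S·N_u. -/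
open Real MeasureTheory Filter Set Topology

noncomputable section

/-- The particle-current component
`N_v = π r⁻² ∫∫ Ω²pᵘ f̄|_{pᵛ = l²/(Ω²r²pᵘ)} (dpᵘ/pᵘ) l dl`. -/
def Nv (r Ω2 : ℝ → ℝ → ℝ) (fbar : ℝ → ℝ → ℝ → ℝ → ℝ → ℝ) (u v : ℝ) : ℝ :=
  π * ((r u v) ^ 2)⁻¹ *
    ∫ p in Ioi (0 : ℝ), p⁻¹ *
      (∫ l in Ioi (0 : ℝ),
        Ω2 u v * p * fbar u v p (l ^ 2 / (Ω2 u v * (r u v) ^ 2 * p)) l * l)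

/-- The particle-current component
`N_u = π r⁻² ∫∫ Ω²pᵛ f̄|_{pᵛ = l²/(Ω²r²pᵘ)} (dpᵘ/pᵘ) l dl`. -/
def Nu (r Ω2 : ℝ → ℝ → ℝ) (fbar : ℝ → ℝ → ℝ → ℝ → ℝ → ℝ) (u v : ℝ) : ℝ :=
  π * ((r u v) ^ 2)⁻¹ *
    ∫ p in Ioi (0 : ℝ), p⁻¹ *
      (∫ l in Ioi (0 : ℝ),
        Ω2 u v * (l ^ 2 / (Ω2 u v * (r u v) ^ 2 * p)) *
          fbar u v p (l ^ 2 / (Ω2 u v * (r u v) ^ 2 * p)) l * l)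


/-- Extend integrability from a compact interval to `Ioi 0` when the function vanishes
elsewhere on `Ioi 0`. -/
lemma auxInt1 {h : ℝ → ℝ} {ε M : ℝ}
    (hc : ContinuousOn h (Icc ε M))
    (hz : ∀ x, 0 < x → x ∉ Icc ε M → h x = 0) :
    IntegrableOn h (Ioi 0) := by
  have h1 : IntegrableOn h (Icc ε M) := hc.integrableOn_Icc
  have h2 : IntegrableOn h (Ioi 0 \ Icc ε M) := by
    refine IntegrableOn.congr_fun (integrableOn_zero)
      (fun x hx => (hz x hx.1 hx.2).symm) (measurableSet_Ioi.diff measurableSet_Icc)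
  exact (h1.union h2).mono_set (fun x hx => by
    by_cases hx' : x ∈ Icc ε M
    · exact Or.inl hx'
    · exact Or.inr ⟨hx, hx'⟩)

/-- Iterated integrability of a two-variable function which is continuous on the open
quadrant and vanishes (on the quadrant) outside a compact box. -/
lemma auxInt {φ : ℝ × ℝ → ℝ} {ε M : ℝ} (hε : 0 < ε)
    (hcont : ∀ q : ℝ × ℝ, 0 < q.1 → 0 < q.2 → ContinuousAt φ q)
    (hz : ∀ q : ℝ × ℝ, 0 < q.1 → 0 < q.2 → q ∉ Icc ε M ×ˢ Icc ε M → φ q = 0) :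
    (∀ p, 0 < p → IntegrableOn (fun l => φ (p, l)) (Ioi 0)) ∧
      IntegrableOn (fun p => ∫ l in Ioi 0, φ (p, l)) (Ioi 0) := by
  have hinner : ∀ p, 0 < p → IntegrableOn (fun l => φ (p, l)) (Ioi 0) := by
    intro p hp
    refine auxInt1 (ε := ε) (M := M) (fun l hl => ?_) (fun l hl hl' => ?_)
    · exact ((hcont (p, l) hp (hε.trans_le hl.1)).comp
        ((continuous_const.prodMk continuous_id).continuousAt)).continuousWithinAt
    · refine hz (p, l) hp hl (fun hmem => hl' hmem.2)
  refine ⟨hinner, ?_⟩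
  -- bound for φ on the box
  obtain ⟨B, hB⟩ := (isCompact_Icc.prod isCompact_Icc).exists_bound_of_continuousOn
    (fun q hq => (hcont q (hε.trans_le hq.1.1) (hε.trans_le hq.2.1)).continuousWithinAt)
  set B' : ℝ := max B 0 with hB'def
  have hB'0 : 0 ≤ B' := le_max_right _ _
  refine auxInt1 (ε := ε) (M := M) (fun p₀ hp₀ => ?_) (fun p hp hp' => ?_)
  · -- continuity of the inner integral at p₀ ∈ Icc ε M
    have hp₀pos : 0 < p₀ := hε.trans_le hp₀.1
    refine ContinuousAt.continuousWithinAt ?_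
    refine continuousAt_of_dominated (F := fun p l => φ (p, l)) (bound := (Icc ε M).indicator fun _ => B')
      ?_ ?_ ?_ ?_
    · filter_upwards [(isOpen_Ioi (a := (0:ℝ))).mem_nhds hp₀pos] with p hp
      exact (hinner p hp).aestronglyMeasurable
    · filter_upwards [(isOpen_Ioi (a := (0:ℝ))).mem_nhds hp₀pos] with p hp
      filter_upwards [ae_restrict_mem measurableSet_Ioi] with l hl
      by_cases hmem : (p, l) ∈ Icc ε M ×ˢ Icc ε M
      · have : l ∈ Icc ε M := hmem.2
        rw [indicator_of_mem this]
        exact le_max_of_le_left (hB (p, l) hmem)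
      · rw [hz (p, l) hp hl hmem]
        simp only [norm_zero]
        exact indicator_nonneg (fun _ _ => hB'0) l
    · rw [integrable_indicator_iff measurableSet_Icc]
      refine integrableOn_const (ne_of_lt ?_)
      exact lt_of_le_of_lt (Measure.restrict_apply_le _ _) measure_Icc_lt_top
    · filter_upwards [ae_restrict_mem measurableSet_Ioi] with l hl
      have h1 : ContinuousAt (fun x : ℝ => (x, l)) p₀ :=
        (continuous_id.prodMk continuous_const).continuousAt
      exact ContinuousAt.comp (f := fun x : ℝ => (x, l)) (hcont (p₀, l) hp₀pos hl) h1
  · -- the inner integral vanishes for p outside the box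
    refine setIntegral_eq_zero_of_forall_eq_zero (fun l hl => ?_)
    exact hz (p, l) hp hl (fun hmem => hp' hmem.1)

lemma auxBox {K : Set ℝ} (hK : IsCompact K) (hne : K.Nonempty) (hsub : K ⊆ Ioi 0) :
    ∃ ε M : ℝ, 0 < ε ∧ ∀ x ∈ K, ε ≤ x ∧ x ≤ M := by
  obtain ⟨lo, hlo⟩ := hK.exists_isLeast hne
  obtain ⟨hi, hhi⟩ := hK.exists_isGreatest hne
  exact ⟨lo, hi, hsub hlo.1, fun x hx => ⟨hlo.2 hx, hhi.2 hx⟩⟩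


/-- First integrand: `pᵘ⁻¹ · (Ω²pᵘ · ω · f̄ · l)`. -/
def A1 (W : ℝ) (g ω : ℝ → ℝ → ℝ) (q : ℝ × ℝ) : ℝ :=
  q.1⁻¹ * (W * q.1 * ω q.1 q.2 * g q.1 q.2 * q.2)

/-- Second integrand: `pᵘ⁻¹ · (Ω²pᵛ · ω · f̄ · l)` with `pᵛ = l²/(c pᵘ)`. -/
def A2 (W c : ℝ) (g ω : ℝ → ℝ → ℝ) (q : ℝ × ℝ) : ℝ :=
  q.1⁻¹ * (W * (q.2 ^ 2 / (c * q.1)) * ω q.1 q.2 * g q.1 q.2 * q.2)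

/-- Third integrand: `pᵘ⁻¹ · (ω · f̄ · l)`. -/
def A3 (g ω : ℝ → ℝ → ℝ) (q : ℝ × ℝ) : ℝ :=
  q.1⁻¹ * (ω q.1 q.2 * g q.1 q.2 * q.2)

lemma mainIneq (W c a b κ S : ℝ) (g : ℝ → ℝ → ℝ) (ε M : ℝ)
    (hW : 0 < W) (hc : 0 < c) (ha : 0 < a) (hb : 0 < b) (hκ : κ = 4 * a * b / W)
    (hε : 0 < ε)
    (hgc : ∀ q : ℝ × ℝ, 0 < q.1 → 0 < q.2 →
      ContinuousAt (fun q : ℝ × ℝ => g q.1 q.2) q)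
    (hgnn : ∀ p l : ℝ, 0 ≤ g p l)
    (hgz : ∀ q : ℝ × ℝ, 0 < q.1 → 0 < q.2 → q ∉ Icc ε M ×ˢ Icc ε M → g q.1 q.2 = 0)
    (hSb : ∀ p l : ℝ, 0 < p → 0 < l → g p l ≠ 0 → b * (l ^ 2 / (c * p)) + a * p ≤ S)
    (ω : ℝ → ℝ → ℝ)
    (hωc : ∀ q : ℝ × ℝ, 0 < q.1 → 0 < q.2 →
      ContinuousAt (fun q : ℝ × ℝ => ω q.1 q.2) q)
    (hωnn : ∀ p l : ℝ, 0 < p → 0 < l → 0 ≤ ω p l) :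
    κ / b * (∫ p in Ioi (0:ℝ), ∫ l in Ioi (0:ℝ), A1 W g ω (p, l)) +
      κ / a * (∫ p in Ioi (0:ℝ), ∫ l in Ioi (0:ℝ), A2 W c g ω (p, l)) ≤
    4 * S * (∫ p in Ioi (0:ℝ), ∫ l in Ioi (0:ℝ), A3 g ω (p, l)) := by
  have hκpos : 0 < κ := by rw [hκ]; positivity
  -- continuity of the integrands
  have hfst : ∀ q : ℝ × ℝ, 0 < q.1 → ContinuousAt (fun q : ℝ × ℝ => q.1⁻¹) q :=
    fun q hq => continuous_fst.continuousAt.inv₀ (ne_of_gt hq)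
  have hA1c : ∀ q : ℝ × ℝ, 0 < q.1 → 0 < q.2 → ContinuousAt (A1 W g ω) q := by
    intro q h1 h2
    exact (hfst q h1).mul (((((continuous_const.mul continuous_fst).continuousAt).mul
      (hωc q h1 h2)).mul (hgc q h1 h2)).mul continuous_snd.continuousAt)
  have hA2c : ∀ q : ℝ × ℝ, 0 < q.1 → 0 < q.2 → ContinuousAt (A2 W c g ω) q := by
    intro q h1 h2
    have hdiv : ContinuousAt (fun q : ℝ × ℝ => W * (q.2 ^ 2 / (c * q.1))) q :=
      continuousAt_const.mul (((continuous_snd.pow 2).continuousAt).div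
        ((continuous_const.mul continuous_fst).continuousAt)
        (by positivity))
    exact (hfst q h1).mul (((hdiv.mul (hωc q h1 h2)).mul (hgc q h1 h2)).mul
      continuous_snd.continuousAt)
  have hA3c : ∀ q : ℝ × ℝ, 0 < q.1 → 0 < q.2 → ContinuousAt (A3 g ω) q := by
    intro q h1 h2
    exact (hfst q h1).mul (((hωc q h1 h2).mul (hgc q h1 h2)).mul
      continuous_snd.continuousAt)
  -- vanishing of the integrands outside the box
  have hA1z : ∀ q : ℝ × ℝ, 0 < q.1 → 0 < q.2 → q ∉ Icc ε M ×ˢ Icc ε M →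
      A1 W g ω q = 0 := by
    intro q h1 h2 hq; unfold A1; rw [hgz q h1 h2 hq]; ring
  have hA2z : ∀ q : ℝ × ℝ, 0 < q.1 → 0 < q.2 → q ∉ Icc ε M ×ˢ Icc ε M →
      A2 W c g ω q = 0 := by
    intro q h1 h2 hq; unfold A2; rw [hgz q h1 h2 hq]; ring
  have hA3z : ∀ q : ℝ × ℝ, 0 < q.1 → 0 < q.2 → q ∉ Icc ε M ×ˢ Icc ε M →
      A3 g ω q = 0 := by
    intro q h1 h2 hq; unfold A3; rw [hgz q h1 h2 hq]; ring
  obtain ⟨h1a, h1b⟩ := auxInt hε hA1c hA1z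
  obtain ⟨h2a, h2b⟩ := auxInt hε hA2c hA2z
  obtain ⟨h3a, h3b⟩ := auxInt hε hA3c hA3z
  -- nonnegativity of the integrands
  have hA1nn : ∀ p l : ℝ, 0 < p → 0 < l → 0 ≤ A1 W g ω (p, l) := by
    intro p l hp hl; unfold A1; simp only
    have := hωnn p l hp hl; have := hgnn p l; positivity
  have hA2nn : ∀ p l : ℝ, 0 < p → 0 < l → 0 ≤ A2 W c g ω (p, l) := by
    intro p l hp hl; unfold A2; simp only
    have := hωnn p l hp hl; have := hgnn p l; positivity
  have hA3nn : ∀ p l : ℝ, 0 < p → 0 < l → 0 ≤ A3 g ω (p, l) := by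
    intro p l hp hl; unfold A3; simp only
    have := hωnn p l hp hl; have := hgnn p l; positivity
  -- pointwise key inequality
  have hkey : ∀ p l : ℝ, 0 < p → 0 < l →
      κ / b * A1 W g ω (p, l) + κ / a * A2 W c g ω (p, l) ≤
        4 * S * A3 g ω (p, l) := by
    intro p l hp hl
    by_cases hg : g p l = 0
    · unfold A1 A2 A3; simp [hg]
    · have hS4 : κ / b * (W * p) + κ / a * (W * (l ^ 2 / (c * p))) ≤ 4 * S := by
        have heq : κ / b * (W * p) + κ / a * (W * (l ^ 2 / (c * p))) =
            4 * (b * (l ^ 2 / (c * p)) + a * p) := by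
          rw [hκ]; field_simp; ring
        rw [heq]
        have := hSb p l hp hl hg
        linarith
      have hst : 0 ≤ p⁻¹ * (ω p l * g p l * l) := by
        have := hωnn p l hp hl; have := hgnn p l; positivity
      calc κ / b * A1 W g ω (p, l) + κ / a * A2 W c g ω (p, l)
          = p⁻¹ * (ω p l * g p l * l) *
              (κ / b * (W * p) + κ / a * (W * (l ^ 2 / (c * p)))) := by
            unfold A1 A2; ring
        _ ≤ p⁻¹ * (ω p l * g p l * l) * (4 * S) :=
            mul_le_mul_of_nonneg_left hS4 hst
        _ = 4 * S * A3 g ω (p, l) := by unfold A3; ring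
  -- assemble
  calc κ / b * (∫ p in Ioi (0:ℝ), ∫ l in Ioi (0:ℝ), A1 W g ω (p, l)) +
        κ / a * (∫ p in Ioi (0:ℝ), ∫ l in Ioi (0:ℝ), A2 W c g ω (p, l))
      = ∫ p in Ioi (0:ℝ), (κ / b * ∫ l in Ioi (0:ℝ), A1 W g ω (p, l)) +
          (κ / a * ∫ l in Ioi (0:ℝ), A2 W c g ω (p, l)) := by
        rw [← integral_const_mul, ← integral_const_mul,
          integral_add (h1b.const_mul _) (h2b.const_mul _)]
    _ ≤ ∫ p in Ioi (0:ℝ), 4 * S * ∫ l in Ioi (0:ℝ), A3 g ω (p, l) := by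
        refine integral_mono_of_nonneg ?_ (h3b.const_mul _) ?_
        · filter_upwards [ae_restrict_mem measurableSet_Ioi] with p hp
          have i1 : 0 ≤ ∫ l in Ioi (0:ℝ), A1 W g ω (p, l) :=
            setIntegral_nonneg measurableSet_Ioi (fun l hl => hA1nn p l hp hl)
          have i2 : 0 ≤ ∫ l in Ioi (0:ℝ), A2 W c g ω (p, l) :=
            setIntegral_nonneg measurableSet_Ioi (fun l hl => hA2nn p l hp hl)
          have := hκpos.le
          positivity
        · filter_upwards [ae_restrict_mem measurableSet_Ioi] with p hp
          rw [← integral_const_mul, ← integral_const_mul, ← integral_const_mul,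
            ← integral_add ((h1a p hp).const_mul _) ((h2a p hp).const_mul _)]
          refine integral_mono_of_nonneg ?_ ((h3a p hp).const_mul _) ?_
          · filter_upwards [ae_restrict_mem measurableSet_Ioi] with l hl
            have := hA1nn p l hp hl; have := hA2nn p l hp hl
            have := hκpos.le
            have hb' : 0 ≤ κ / b := by positivity
            have ha' : 0 ≤ κ / a := by positivity
            exact add_nonneg (mul_nonneg hb' ‹0 ≤ A1 W g ω (p, l)›)
              (mul_nonneg ha' ‹0 ≤ A2 W c g ω (p, l)›)
          · filter_upwards [ae_restrict_mem measurableSet_Ioi] with l hl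
            exact hkey p l hp hl
    _ = 4 * S * ∫ p in Ioi (0:ℝ), ∫ l in Ioi (0:ℝ), A3 g ω (p, l) :=
        integral_const_mul _ _

/-- **Bound of the energy-momentum components by the particle current** (inequalities
(2.33)–(2.34) of Moschidis, *A proof of the instability of AdS for the Einstein–massless
Vlasov system*): with `S` the supremum of `∂_v r·pᵛ − ∂_u r·pᵘ` over the part of the mass
shell lying in the momentum support of `f̄(u,v;·,·,·)`, one has
`((1−2m/r)/∂_v r)T_vv + ((1−2m/r)/(−∂_u r))T_uv ≤ 2·S·N_v` and
`((1−2m/r)/∂_v r)T_uv + ((1−2m/r)/(−∂_u r))T_uu ≤ 2·S·N_u`. -/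
theorem energy_momentum_particle_current_bound
    (Udom : Set (ℝ × ℝ)) (hopen : IsOpen Udom)
    (r Ω2 : ℝ → ℝ → ℝ) (fbar : ℝ → ℝ → ℝ → ℝ → ℝ → ℝ)
    (hrpos : ∀ p ∈ Udom, 0 < r p.1 p.2) (hΩpos : ∀ p ∈ Udom, 0 < Ω2 p.1 p.2)
    (hrs : ContDiffOn ℝ (⊤ : ℕ∞) (fun p : ℝ × ℝ => r p.1 p.2) Udom)
    (hΩs : ContDiffOn ℝ (⊤ : ℕ∞) (fun p : ℝ × ℝ => Ω2 p.1 p.2) Udom)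
    (hfnn : ∀ u v pu pv lm, 0 ≤ fbar u v pu pv lm)
    (hfs : ContDiffOn ℝ (⊤ : ℕ∞)
      (fun q : (ℝ × ℝ) × ℝ × ℝ × ℝ => fbar q.1.1 q.1.2 q.2.1 q.2.2.1 q.2.2.2)
      (Udom ×ˢ (Ioi (0 : ℝ) ×ˢ (Ioi (0 : ℝ) ×ˢ Ioi (0 : ℝ)))))
    (hfc : ∀ K : Set (ℝ × ℝ), IsCompact K → K ⊆ Udom →
      ∃ C : Set (ℝ × ℝ × ℝ), IsCompact C ∧
        C ⊆ Ioi (0 : ℝ) ×ˢ (Ioi (0 : ℝ) ×ˢ Ioi (0 : ℝ)) ∧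
        ∀ p ∈ K, ∀ q : ℝ × ℝ × ℝ, q ∉ C → fbar p.1 p.2 q.1 q.2.1 q.2.2 = 0)
    (u v : ℝ) (hmem : (u, v) ∈ Udom)
    (hdur : pdu r u v < 0) (hdvr : 0 < pdv r u v)
    (htrap : 2 * hawk r Ω2 u v / r u v < 1)
    (S : ℝ)
    (hS : S = sSup {x : ℝ | ∃ pu pv lm : ℝ,
      (pu, pv, lm) ∈ closure {q : ℝ × ℝ × ℝ | fbar u v q.1 q.2.1 q.2.2 ≠ 0} ∧
      Ω2 u v * pu * pv = lm ^ 2 / (r u v) ^ 2 ∧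
      x = pdv r u v * pv - pdu r u v * pu}) :
    ((1 - 2 * hawk r Ω2 u v / r u v) / pdv r u v) * Tvv r Ω2 fbar u v +
        ((1 - 2 * hawk r Ω2 u v / r u v) / (-pdu r u v)) * Tuv r Ω2 fbar u v ≤
      2 * S * Nv r Ω2 fbar u v ∧
      ((1 - 2 * hawk r Ω2 u v / r u v) / pdv r u v) * Tuv r Ω2 fbar u v +
          ((1 - 2 * hawk r Ω2 u v / r u v) / (-pdu r u v)) * Tuu r Ω2 fbar u v ≤
        2 * S * Nu r Ω2 fbar u v := by
  obtain ⟨C, hCcomp, hCsub, hCz0⟩ :=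
    hfc {(u, v)} isCompact_singleton (singleton_subset_iff.2 hmem)
  have hCz : ∀ q : ℝ × ℝ × ℝ, q ∉ C → fbar u v q.1 q.2.1 q.2.2 = 0 :=
    fun q hq => hCz0 (u, v) (mem_singleton _) q hq
  by_cases hzero : ∀ pu pv lm : ℝ, fbar u v pu pv lm = 0
  · constructor <;> simp [Tvv, Tuv, Tuu, Nv, Nu, hzero]
  push_neg at hzero
  obtain ⟨pu₀, pv₀, l₀, h₀⟩ := hzero
  have hC0 : (pu₀, pv₀, l₀) ∈ C := by
    by_contra h; exact h₀ (hCz _ h)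
  have hR : 0 < r u v := hrpos (u, v) hmem
  have hW : 0 < Ω2 u v := hΩpos (u, v) hmem
  set a := -pdu r u v with ha_def
  set b := pdv r u v with hb_def
  have ha : 0 < a := neg_pos.2 hdur
  have hb : 0 < b := hdvr
  have hpdu : pdu r u v = -a := by rw [ha_def]; ring
  set κ := 1 - 2 * hawk r Ω2 u v / r u v with hκ_def
  have hκeq : κ = 4 * a * b / Ω2 u v := by
    rw [hκ_def, ha_def, hb_def]
    unfold hawk
    field_simp
    ring
  -- the box containing the momentum support
  have hK1 : IsCompact (Prod.fst '' C) := hCcomp.image continuous_fst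
  have hK2 : IsCompact ((fun q : ℝ × ℝ × ℝ => q.2.1) '' C) :=
    hCcomp.image (continuous_fst.comp continuous_snd)
  have hK3 : IsCompact ((fun q : ℝ × ℝ × ℝ => q.2.2) '' C) :=
    hCcomp.image (continuous_snd.comp continuous_snd)
  obtain ⟨ε₁, M₁, hε₁, hbox₁⟩ := auxBox hK1 ⟨_, mem_image_of_mem _ hC0⟩
    (fun x ⟨q, hq, hxq⟩ => hxq ▸ (hCsub hq).1)
  obtain ⟨ε₂, M₂, hε₂, hbox₂⟩ := auxBox hK2 ⟨_, mem_image_of_mem _ hC0⟩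
    (fun x ⟨q, hq, hxq⟩ => hxq ▸ (hCsub hq).2.1)
  obtain ⟨ε₃, M₃, hε₃, hbox₃⟩ := auxBox hK3 ⟨_, mem_image_of_mem _ hC0⟩
    (fun x ⟨q, hq, hxq⟩ => hxq ▸ (hCsub hq).2.2)
  set ε := min ε₁ ε₃ with hε_def
  set M := max M₁ M₃ with hM_def
  have hε : 0 < ε := lt_min hε₁ hε₃
  set g : ℝ → ℝ → ℝ :=
    fun p l => fbar u v p (l ^ 2 / (Ω2 u v * (r u v) ^ 2 * p)) l with hg_def
  have hsupp : ∀ p l : ℝ, g p l ≠ 0 →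
      (p, l ^ 2 / (Ω2 u v * (r u v) ^ 2 * p), l) ∈ C := by
    intro p l h
    by_contra hq
    exact h (hCz _ hq)
  have hgnn : ∀ p l : ℝ, 0 ≤ g p l := fun p l => hfnn _ _ _ _ _
  have hgz : ∀ q : ℝ × ℝ, 0 < q.1 → 0 < q.2 → q ∉ Icc ε M ×ˢ Icc ε M →
      g q.1 q.2 = 0 := by
    intro q h1 h2 hq
    by_contra hne
    have hmemC := hsupp q.1 q.2 hne
    have hp := hbox₁ _ (mem_image_of_mem _ hmemC)
    have hl := hbox₃ _ (mem_image_of_mem _ hmemC)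
    exact hq ⟨⟨le_trans (min_le_left _ _) hp.1, le_trans hp.2 (le_max_left _ _)⟩,
      ⟨le_trans (min_le_right _ _) hl.1, le_trans hl.2 (le_max_right _ _)⟩⟩
  -- continuity of g on the open quadrant
  have hopenbig : IsOpen (Udom ×ˢ (Ioi (0:ℝ) ×ˢ (Ioi (0:ℝ) ×ˢ Ioi (0:ℝ)))) :=
    hopen.prod (isOpen_Ioi.prod (isOpen_Ioi.prod isOpen_Ioi))
  have hgc : ∀ q : ℝ × ℝ, 0 < q.1 → 0 < q.2 →
      ContinuousAt (fun q : ℝ × ℝ => g q.1 q.2) q := by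
    intro q h1 h2
    have hden : (0:ℝ) < Ω2 u v * (r u v) ^ 2 * q.1 := by positivity
    have hmem' : (((u, v), (q.1, (q.2 ^ 2 / (Ω2 u v * (r u v) ^ 2 * q.1), q.2))) :
        (ℝ × ℝ) × ℝ × ℝ × ℝ) ∈ Udom ×ˢ (Ioi (0:ℝ) ×ˢ (Ioi (0:ℝ) ×ˢ Ioi (0:ℝ))) := by
      refine ⟨hmem, h1, ?_, h2⟩
      exact div_pos (by positivity) hden
    have hF : ContinuousAt
        (fun z : (ℝ × ℝ) × ℝ × ℝ × ℝ => fbar z.1.1 z.1.2 z.2.1 z.2.2.1 z.2.2.2)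
        ((u, v), (q.1, (q.2 ^ 2 / (Ω2 u v * (r u v) ^ 2 * q.1), q.2))) :=
      (hfs.continuousOn).continuousAt (hopenbig.mem_nhds hmem')
    have hΨ : ContinuousAt (fun q : ℝ × ℝ =>
        (((u, v), (q.1, (q.2 ^ 2 / (Ω2 u v * (r u v) ^ 2 * q.1), q.2))) :
          (ℝ × ℝ) × ℝ × ℝ × ℝ)) q := by
      refine ContinuousAt.prodMk continuousAt_const ?_
      refine ContinuousAt.prodMk continuous_fst.continuousAt ?_
      refine ContinuousAt.prodMk ?_ continuous_snd.continuousAt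
      exact ((continuous_snd.pow 2).continuousAt).div
        ((continuous_const.mul continuous_fst).continuousAt) (ne_of_gt hden)
    exact ContinuousAt.comp (f := fun q : ℝ × ℝ =>
      (((u, v), (q.1, (q.2 ^ 2 / (Ω2 u v * (r u v) ^ 2 * q.1), q.2))) :
        (ℝ × ℝ) × ℝ × ℝ × ℝ)) hF hΨ
  -- the supremum bound
  have hSb : ∀ p l : ℝ, 0 < p → 0 < l → g p l ≠ 0 →
      b * (l ^ 2 / (Ω2 u v * (r u v) ^ 2 * p)) + a * p ≤ S := by
    intro p l hp hl hg
    have hbdd : BddAbove {x : ℝ | ∃ pu pv lm : ℝ,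
        (pu, pv, lm) ∈ closure {q : ℝ × ℝ × ℝ | fbar u v q.1 q.2.1 q.2.2 ≠ 0} ∧
        Ω2 u v * pu * pv = lm ^ 2 / (r u v) ^ 2 ∧
        x = b * pv - pdu r u v * pu} := by
      refine ⟨b * M₂ + a * M₁, ?_⟩
      rintro x ⟨pu', pv', lm', hcl, hshell, rfl⟩
      have hC' : (pu', pv', lm') ∈ C := by
        have hsub' : {q : ℝ × ℝ × ℝ | fbar u v q.1 q.2.1 q.2.2 ≠ 0} ⊆ C :=
          fun q hq => by by_contra h; exact hq (hCz q h)
        exact closure_minimal hsub' hCcomp.isClosed hcl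
      have h1 := hbox₁ _ (mem_image_of_mem _ hC')
      have h2 := hbox₂ _ (mem_image_of_mem _ hC')
      rw [hpdu]
      nlinarith [h1.1, h1.2, h2.1, h2.2, ha, hb]
    have hmemS : b * (l ^ 2 / (Ω2 u v * (r u v) ^ 2 * p)) + a * p ∈
        {x : ℝ | ∃ pu pv lm : ℝ,
          (pu, pv, lm) ∈ closure {q : ℝ × ℝ × ℝ | fbar u v q.1 q.2.1 q.2.2 ≠ 0} ∧
          Ω2 u v * pu * pv = lm ^ 2 / (r u v) ^ 2 ∧
          x = b * pv - pdu r u v * pu} := by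
      refine ⟨p, l ^ 2 / (Ω2 u v * (r u v) ^ 2 * p), l, subset_closure hg, ?_, ?_⟩
      · field_simp
      · rw [hpdu]; ring
    rw [hS]
    exact le_csSup hbdd hmemS
  -- apply the main inequality to the two weights
  have hω₁c : ∀ q : ℝ × ℝ, 0 < q.1 → 0 < q.2 →
      ContinuousAt (fun q : ℝ × ℝ => (fun p _ : ℝ => Ω2 u v * p) q.1 q.2) q :=
    fun q _ _ => (continuous_const.mul continuous_fst).continuousAt
  have hω₁nn : ∀ p l : ℝ, 0 < p → 0 < l → 0 ≤ (fun p _ : ℝ => Ω2 u v * p) p l :=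
    fun p l hp _ => by positivity
  have hω₂c : ∀ q : ℝ × ℝ, 0 < q.1 → 0 < q.2 →
      ContinuousAt (fun q : ℝ × ℝ =>
        (fun p l : ℝ => Ω2 u v * (l ^ 2 / (Ω2 u v * (r u v) ^ 2 * p))) q.1 q.2) q := by
    intro q h1 h2
    exact continuousAt_const.mul (((continuous_snd.pow 2).continuousAt).div
      ((continuous_const.mul continuous_fst).continuousAt) (by positivity))
  have hω₂nn : ∀ p l : ℝ, 0 < p → 0 < l →
      0 ≤ (fun p l : ℝ => Ω2 u v * (l ^ 2 / (Ω2 u v * (r u v) ^ 2 * p))) p l :=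
    fun p l hp hl => by positivity
  have key1 := mainIneq (Ω2 u v) (Ω2 u v * (r u v) ^ 2) a b κ S g ε M hW
    (by positivity) ha hb hκeq hε hgc hgnn hgz hSb
    (fun p _ : ℝ => Ω2 u v * p) hω₁c hω₁nn
  have key2 := mainIneq (Ω2 u v) (Ω2 u v * (r u v) ^ 2) a b κ S g ε M hW
    (by positivity) ha hb hκeq hε hgc hgnn hgz hSb
    (fun p l : ℝ => Ω2 u v * (l ^ 2 / (Ω2 u v * (r u v) ^ 2 * p))) hω₂c hω₂nn
  -- identifications of the integrals
  have hjvv : Tvv r Ω2 fbar u v = π / 2 * ((r u v) ^ 2)⁻¹ *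
      ∫ p in Ioi (0:ℝ), ∫ l in Ioi (0:ℝ),
        A1 (Ω2 u v) g (fun p _ : ℝ => Ω2 u v * p) (p, l) := by
    unfold Tvv
    congr 1
    congr 1
    funext p
    rw [← integral_const_mul]
    try congr 1
    try funext l
    try simp only [A1, hg_def]
    try ring
  have hjuv : Tuv r Ω2 fbar u v = π / 2 * ((r u v) ^ 2)⁻¹ *
      ∫ p in Ioi (0:ℝ), ∫ l in Ioi (0:ℝ),
        A2 (Ω2 u v) (Ω2 u v * (r u v) ^ 2) g (fun p _ : ℝ => Ω2 u v * p) (p, l) := by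
    unfold Tuv
    congr 1
    congr 1
    funext p
    rw [← integral_const_mul]
    try congr 1
    try funext l
    try simp only [A2, hg_def]
    try ring
  have hjuv2 : Tuv r Ω2 fbar u v = π / 2 * ((r u v) ^ 2)⁻¹ *
      ∫ p in Ioi (0:ℝ), ∫ l in Ioi (0:ℝ),
        A1 (Ω2 u v) g
          (fun p l : ℝ => Ω2 u v * (l ^ 2 / (Ω2 u v * (r u v) ^ 2 * p))) (p, l) := by
    unfold Tuv
    congr 1
    congr 1
    funext p
    rw [← integral_const_mul]
    try congr 1
    try funext l
    try simp only [A1, hg_def]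
    try ring
  have hjuu : Tuu r Ω2 fbar u v = π / 2 * ((r u v) ^ 2)⁻¹ *
      ∫ p in Ioi (0:ℝ), ∫ l in Ioi (0:ℝ),
        A2 (Ω2 u v) (Ω2 u v * (r u v) ^ 2) g
          (fun p l : ℝ => Ω2 u v * (l ^ 2 / (Ω2 u v * (r u v) ^ 2 * p))) (p, l) := by
    unfold Tuu
    congr 1
    congr 1
    funext p
    rw [← integral_const_mul]
    try congr 1
    try funext l
    try simp only [A2, hg_def]
    try ring
  have hjnv : Nv r Ω2 fbar u v = π * ((r u v) ^ 2)⁻¹ *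
      ∫ p in Ioi (0:ℝ), ∫ l in Ioi (0:ℝ),
        A3 g (fun p _ : ℝ => Ω2 u v * p) (p, l) := by
    unfold Nv
    congr 1
    congr 1
    funext p
    rw [← integral_const_mul]
    try congr 1
    try funext l
    try simp only [A3, hg_def]
    try ring
  have hjnu : Nu r Ω2 fbar u v = π * ((r u v) ^ 2)⁻¹ *
      ∫ p in Ioi (0:ℝ), ∫ l in Ioi (0:ℝ),
        A3 g
          (fun p l : ℝ => Ω2 u v * (l ^ 2 / (Ω2 u v * (r u v) ^ 2 * p))) (p, l) := by
    unfold Nu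
    congr 1
    congr 1
    funext p
    rw [← integral_const_mul]
    try congr 1
    try funext l
    try simp only [A3, hg_def]
    try ring
  constructor
  · rw [hjvv, hjuv, hjnv]
    calc κ / b * (π / 2 * ((r u v) ^ 2)⁻¹ *
            ∫ p in Ioi (0:ℝ), ∫ l in Ioi (0:ℝ),
              A1 (Ω2 u v) g (fun p _ : ℝ => Ω2 u v * p) (p, l)) +
          κ / a * (π / 2 * ((r u v) ^ 2)⁻¹ *
            ∫ p in Ioi (0:ℝ), ∫ l in Ioi (0:ℝ),
              A2 (Ω2 u v) (Ω2 u v * (r u v) ^ 2) g (fun p _ : ℝ => Ω2 u v * p) (p, l))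
        = π / 2 * ((r u v) ^ 2)⁻¹ *
            (κ / b * (∫ p in Ioi (0:ℝ), ∫ l in Ioi (0:ℝ),
              A1 (Ω2 u v) g (fun p _ : ℝ => Ω2 u v * p) (p, l)) +
            κ / a * (∫ p in Ioi (0:ℝ), ∫ l in Ioi (0:ℝ),
              A2 (Ω2 u v) (Ω2 u v * (r u v) ^ 2) g
                (fun p _ : ℝ => Ω2 u v * p) (p, l))) := by ring
      _ ≤ π / 2 * ((r u v) ^ 2)⁻¹ *
            (4 * S * (∫ p in Ioi (0:ℝ), ∫ l in Ioi (0:ℝ),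
              A3 g (fun p _ : ℝ => Ω2 u v * p) (p, l))) :=
          mul_le_mul_of_nonneg_left key1 (by positivity)
      _ = 2 * S * (π * ((r u v) ^ 2)⁻¹ *
            ∫ p in Ioi (0:ℝ), ∫ l in Ioi (0:ℝ),
              A3 g (fun p _ : ℝ => Ω2 u v * p) (p, l)) := by ring
  · rw [hjuv2, hjuu, hjnu]
    calc κ / b * (π / 2 * ((r u v) ^ 2)⁻¹ *
            ∫ p in Ioi (0:ℝ), ∫ l in Ioi (0:ℝ),
              A1 (Ω2 u v) g
                (fun p l : ℝ => Ω2 u v * (l ^ 2 / (Ω2 u v * (r u v) ^ 2 * p))) (p, l)) +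
          κ / a * (π / 2 * ((r u v) ^ 2)⁻¹ *
            ∫ p in Ioi (0:ℝ), ∫ l in Ioi (0:ℝ),
              A2 (Ω2 u v) (Ω2 u v * (r u v) ^ 2) g
                (fun p l : ℝ => Ω2 u v * (l ^ 2 / (Ω2 u v * (r u v) ^ 2 * p))) (p, l))
        = π / 2 * ((r u v) ^ 2)⁻¹ *
            (κ / b * (∫ p in Ioi (0:ℝ), ∫ l in Ioi (0:ℝ),
              A1 (Ω2 u v) g
                (fun p l : ℝ => Ω2 u v * (l ^ 2 / (Ω2 u v * (r u v) ^ 2 * p))) (p, l)) +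
            κ / a * (∫ p in Ioi (0:ℝ), ∫ l in Ioi (0:ℝ),
              A2 (Ω2 u v) (Ω2 u v * (r u v) ^ 2) g
                (fun p l : ℝ => Ω2 u v * (l ^ 2 / (Ω2 u v * (r u v) ^ 2 * p))) (p, l))) := by
          ring
      _ ≤ π / 2 * ((r u v) ^ 2)⁻¹ *
            (4 * S * (∫ p in Ioi (0:ℝ), ∫ l in Ioi (0:ℝ),
              A3 g
                (fun p l : ℝ => Ω2 u v * (l ^ 2 / (Ω2 u v * (r u v) ^ 2 * p))) (p, l))) :=
          mul_le_mul_of_nonneg_left key2 (by positivity)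
      _ = 2 * S * (π * ((r u v) ^ 2)⁻¹ *
            ∫ p in Ioi (0:ℝ), ∫ l in Ioi (0:ℝ),
              A3 g
                (fun p l : ℝ => Ω2 u v * (l ^ 2 / (Ω2 u v * (r u v) ^ 2 * p))) (p, l)) := by
          ring

end
end

section
/- Let 𝒰 ⊆ ℝ² be open, let r, Ω² : 𝒰 → (0,∞) be smooth with ∂_u r < 0 on 𝒰, and let γ : [s₀,s₁] → 𝒰 be a C¹ curve, γ(s) = (u(s),v(s)) with γ̇^u := du/ds > 0 and γ̇^v := dv/ds > 0, satisfying the mass-shell relation Ω²·γ̇^u·γ̇^v = l²/r² along γ for some l > 0. Assume that along γ: (i) Ω²γ̇^u ≥ e₀ for some e₀ > 0; (ii) Ω²/(−∂_u r) ≤ K for some K > 0; and (iii) ∂_v r·γ̇^v ≤ (1/2)(−∂_u r)·γ̇^u. Then r is strictly decreasing along γ, and v(γ(s₁)) − v(γ(s₀)) ≤ 2K·l² / ( e₀² · r(γ(s₁)) ). -/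
open Real MeasureTheory Filter Set Topology

noncomputable section

/-- Chain rule for a curve through a two-variable function, expressed with `pdu`/`pdv`. -/
lemma hasDerivWithinAt_comp_curve (f : ℝ → ℝ → ℝ) {gu gv : ℝ → ℝ} {a b s : ℝ} {S : Set ℝ}
    (hf : DifferentiableAt ℝ (fun q : ℝ × ℝ => f q.1 q.2) (gu s, gv s))
    (hu : HasDerivWithinAt gu a S s) (hv : HasDerivWithinAt gv b S s) :
    HasDerivWithinAt (fun t => f (gu t) (gv t))
      (pdu f (gu s) (gv s) * a + pdv f (gu s) (gv s) * b) S s := by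
  set F : ℝ × ℝ → ℝ := fun q => f q.1 q.2 with hF
  set F' := fderiv ℝ F (gu s, gv s) with hF'
  have hFd : HasFDerivAt F F' (gu s, gv s) := hf.hasFDerivAt
  have hcomp : HasDerivWithinAt (fun t => f (gu t) (gv t)) (F' (a, b)) S s := by
    have := hFd.comp_hasDerivWithinAt s (hu.prodMk hv)
    exact this
  have hpdu : pdu f (gu s) (gv s) = F' (1, 0) := by
    have hc : HasDerivAt (fun x : ℝ => ((x, gv s) : ℝ × ℝ)) ((1 : ℝ), (0 : ℝ)) (gu s) :=
      (hasDerivAt_id (gu s)).prodMk (hasDerivAt_const (gu s) (gv s))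
    have h := hFd.comp_hasDerivAt (gu s) hc
    have h' : HasDerivAt (fun x : ℝ => f x (gv s)) (F' (1, 0)) (gu s) := by
      exact h
    simpa [pdu] using h'.deriv
  have hpdv : pdv f (gu s) (gv s) = F' (0, 1) := by
    have hc : HasDerivAt (fun y : ℝ => ((gu s, y) : ℝ × ℝ)) ((0 : ℝ), (1 : ℝ)) (gv s) :=
      (hasDerivAt_const (gv s) (gu s)).prodMk (hasDerivAt_id (gv s))
    have h := hFd.comp_hasDerivAt (gv s) hc
    have h' : HasDerivAt (fun y : ℝ => f (gu s) y) (F' (0, 1)) (gv s) := by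
      exact h
    simpa [pdv] using h'.deriv
  have hab : ((a, b) : ℝ × ℝ) = a • ((1 : ℝ), (0 : ℝ)) + b • ((0 : ℝ), (1 : ℝ)) := by
    simp [Prod.ext_iff]
  have : F' (a, b) = pdu f (gu s) (gv s) * a + pdv f (gu s) (gv s) * b := by
    rw [hab, map_add, _root_.map_smul, _root_.map_smul, hpdu, hpdv, smul_eq_mul, smul_eq_mul]
    ring
  rwa [this] at hcomp

/-- **Displacement estimate for an ingoing nearly radial null curve** (the estimate
underlying the trapped-surface formation argument for the outermost Vlasov beam in the
spherically symmetric Einstein–massless Vlasov system). Along a future-directed null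
curve with angular momentum `l > 0` on which `Ω²γ̇ᵘ ≥ e₀`, `Ω²/(−∂_u r) ≤ K` and
`∂_v r·γ̇ᵛ ≤ (1/2)(−∂_u r)·γ̇ᵘ`, the area-radius `r` is strictly decreasing and the
advance in `v` is bounded by `2K·l²/(e₀²·r(γ(s₁)))`. -/
theorem ingoing_null_curve_displacement_estimate
    (Udom : Set (ℝ × ℝ)) (hopen : IsOpen Udom)
    (r Ω2 : ℝ → ℝ → ℝ)
    (hrpos : ∀ p ∈ Udom, 0 < r p.1 p.2) (hΩpos : ∀ p ∈ Udom, 0 < Ω2 p.1 p.2)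
    (hrs : ContDiffOn ℝ (⊤ : ℕ∞) (fun p : ℝ × ℝ => r p.1 p.2) Udom)
    (hΩs : ContDiffOn ℝ (⊤ : ℕ∞) (fun p : ℝ × ℝ => Ω2 p.1 p.2) Udom)
    (hdur : ∀ p ∈ Udom, pdu r p.1 p.2 < 0)
    (s₀ s₁ : ℝ) (hs : s₀ ≤ s₁) (gu gv du dv : ℝ → ℝ) (l e₀ K : ℝ)
    (hl : 0 < l) (he : 0 < e₀) (hK : 0 < K)
    (hmem : ∀ s ∈ Icc s₀ s₁, (gu s, gv s) ∈ Udom)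
    (hdu : ∀ s ∈ Icc s₀ s₁, 0 < du s) (hdv : ∀ s ∈ Icc s₀ s₁, 0 < dv s)
    (hduc : ContinuousOn du (Icc s₀ s₁)) (hdvc : ContinuousOn dv (Icc s₀ s₁))
    (hgu : ∀ s ∈ Icc s₀ s₁, HasDerivWithinAt gu (du s) (Icc s₀ s₁) s)
    (hgv : ∀ s ∈ Icc s₀ s₁, HasDerivWithinAt gv (dv s) (Icc s₀ s₁) s)
    (hshell : ∀ s ∈ Icc s₀ s₁,
      Ω2 (gu s) (gv s) * du s * dv s = l ^ 2 / (r (gu s) (gv s)) ^ 2)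
    (h1 : ∀ s ∈ Icc s₀ s₁, e₀ ≤ Ω2 (gu s) (gv s) * du s)
    (h2 : ∀ s ∈ Icc s₀ s₁,
      Ω2 (gu s) (gv s) / (-pdu r (gu s) (gv s)) ≤ K)
    (h3 : ∀ s ∈ Icc s₀ s₁,
      pdv r (gu s) (gv s) * dv s ≤ 1 / 2 * (-pdu r (gu s) (gv s)) * du s) :
    StrictAntiOn (fun s => r (gu s) (gv s)) (Icc s₀ s₁) ∧
      gv s₁ - gv s₀ ≤ 2 * K * l ^ 2 / (e₀ ^ 2 * r (gu s₁) (gv s₁)) := by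
  have hs0 : s₀ ∈ Icc s₀ s₁ := ⟨le_refl _, hs⟩
  have hs1 : s₁ ∈ Icc s₀ s₁ := ⟨hs, le_refl _⟩
  -- derivative of R(s) = r(gu s, gv s)
  set D : ℝ → ℝ := fun s => pdu r (gu s) (gv s) * du s + pdv r (gu s) (gv s) * dv s with hD
  have hRpos : ∀ s ∈ Icc s₀ s₁, 0 < r (gu s) (gv s) := fun s hs' => hrpos _ (hmem s hs')
  have hΩ : ∀ s ∈ Icc s₀ s₁, 0 < Ω2 (gu s) (gv s) := fun s hs' => hΩpos _ (hmem s hs')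
  have hpu : ∀ s ∈ Icc s₀ s₁, pdu r (gu s) (gv s) < 0 := fun s hs' => hdur _ (hmem s hs')
  have hdiff : ∀ s ∈ Icc s₀ s₁,
      DifferentiableAt ℝ (fun p : ℝ × ℝ => r p.1 p.2) (gu s, gv s) := fun s hs' =>
    (hrs.contDiffAt (hopen.mem_nhds (hmem s hs'))).differentiableAt (by simp)
  have hR : ∀ s ∈ Icc s₀ s₁,
      HasDerivWithinAt (fun t => r (gu t) (gv t)) (D s) (Icc s₀ s₁) s := fun s hs' =>
    hasDerivWithinAt_comp_curve r (hdiff s hs') (hgu s hs') (hgv s hs')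
  have hDneg : ∀ s ∈ Icc s₀ s₁, D s < 0 := by
    intro s hs'
    have := h3 s hs'
    have hp := hpu s hs'
    have hd := hdu s hs'
    simp only [hD]
    nlinarith
  have hRcont : ContinuousOn (fun t => r (gu t) (gv t)) (Icc s₀ s₁) := fun s hs' =>
    (hR s hs').continuousWithinAt
  have hstrict : StrictAntiOn (fun s => r (gu s) (gv s)) (Icc s₀ s₁) := by
    apply strictAntiOn_of_deriv_neg (convex_Icc s₀ s₁) hRcont
    intro x hx
    rw [interior_Icc] at hx
    have hx' : x ∈ Icc s₀ s₁ := Ioo_subset_Icc_self hx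
    have hd := (hR x hx').hasDerivAt (Icc_mem_nhds hx.1 hx.2)
    rw [hd.deriv]
    exact hDneg x hx'
  refine ⟨hstrict, ?_⟩
  -- second part
  set C : ℝ := 2 * K * l ^ 2 / e₀ ^ 2 with hC
  have hCpos : 0 < C := by positivity
  set G : ℝ → ℝ := fun s => gv s - C * (r (gu s) (gv s))⁻¹ with hG
  have hGd : ∀ s ∈ Icc s₀ s₁,
      HasDerivWithinAt G (dv s - C * (-D s / (r (gu s) (gv s)) ^ 2)) (Icc s₀ s₁) s := by
    intro s hs'
    exact (hgv s hs').sub (((hR s hs').inv (hRpos s hs').ne').const_mul C)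
  have hGnonpos : ∀ s ∈ Icc s₀ s₁, dv s - C * (-D s / (r (gu s) (gv s)) ^ 2) ≤ 0 := by
    intro s hs'
    set Ω := Ω2 (gu s) (gv s)
    set pu := pdu r (gu s) (gv s)
    set pv := pdv r (gu s) (gv s)
    set R := r (gu s) (gv s)
    have hΩ' : 0 < Ω := hΩ s hs'
    have hpu' : pu < 0 := hpu s hs'
    have hR' : 0 < R := hRpos s hs'
    have hdu' : 0 < du s := hdu s hs'
    have hdv' : 0 < dv s := hdv s hs'
    have hOd : 0 < Ω * du s := mul_pos hΩ' hdu'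
    have h1' : e₀ ≤ Ω * du s := h1 s hs'
    have h2' : Ω ≤ K * (-pu) := by
      have := h2 s hs'
      rw [div_le_iff₀ (by linarith : (0:ℝ) < -pu)] at this
      linarith [this]
    have h3' : pv * dv s ≤ 1 / 2 * (-pu) * du s := h3 s hs'
    -- Ω du ≤ 2 K (−D)
    have hKD : Ω * du s ≤ 2 * K * (-D s) := by
      have hD1 : 1 / 2 * (-pu) * du s ≤ -D s := by
        simp only [hD]; nlinarith
      have hA : Ω * du s ≤ K * (-pu) * du s := mul_le_mul_of_nonneg_right h2' hdu'.le
      have hB : 2 * K * (1 / 2 * (-pu) * du s) ≤ 2 * K * (-D s) :=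
        mul_le_mul_of_nonneg_left hD1 (by positivity)
      calc Ω * du s ≤ K * (-pu) * du s := hA
        _ = 2 * K * (1 / 2 * (-pu) * du s) := by ring
        _ ≤ 2 * K * (-D s) := hB
    -- shell relation cleared of denominators
    have hshell' : Ω * du s * dv s * R ^ 2 = l ^ 2 := by
      have := hshell s hs'
      rw [eq_div_iff (pow_pos hR' 2).ne'] at this
      exact this
    -- dv * R² = l² / (Ω du)
    have hdvR : dv s * R ^ 2 = l ^ 2 / (Ω * du s) := by
      rw [eq_div_iff hOd.ne']
      nlinarith [hshell']
    -- l² / (Ω du) ≤ (l²/e₀²) * (Ω du)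
    have hstep1 : l ^ 2 / (Ω * du s) ≤ l ^ 2 / e₀ ^ 2 * (Ω * du s) := by
      rw [div_le_iff₀ hOd]
      have he2 : 0 < e₀ ^ 2 := by positivity
      rw [div_mul_eq_mul_div, div_mul_eq_mul_div, le_div_iff₀ he2]
      nlinarith [sq_nonneg l, mul_le_mul_of_nonneg_left h1' (mul_pos hl hl).le]
    -- (l²/e₀²) * (Ω du) ≤ C * (−D)
    have hstep2 : l ^ 2 / e₀ ^ 2 * (Ω * du s) ≤ C * (-D s) := by
      have he2 : (0:ℝ) < l ^ 2 / e₀ ^ 2 := by positivity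
      have : l ^ 2 / e₀ ^ 2 * (Ω * du s) ≤ l ^ 2 / e₀ ^ 2 * (2 * K * (-D s)) :=
        mul_le_mul_of_nonneg_left hKD he2.le
      calc l ^ 2 / e₀ ^ 2 * (Ω * du s) ≤ l ^ 2 / e₀ ^ 2 * (2 * K * (-D s)) := this
        _ = C * (-D s) := by rw [hC]; ring
    have hfinal : dv s * R ^ 2 ≤ C * (-D s) := by
      rw [hdvR]; exact hstep1.trans hstep2
    have hR2 : (0:ℝ) < R ^ 2 := by positivity
    have : dv s ≤ C * (-D s) / R ^ 2 := by
      rw [le_div_iff₀ hR2]; exact hfinal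
    have heq : C * (-D s / R ^ 2) = C * (-D s) / R ^ 2 := by ring
    linarith [this, heq ▸ this]
  have hGanti : AntitoneOn G (Icc s₀ s₁) := by
    apply antitoneOn_of_deriv_nonpos (convex_Icc s₀ s₁)
    · exact fun s hs' => (hGd s hs').continuousWithinAt
    · intro x hx
      rw [interior_Icc] at hx
      have hx' : x ∈ Icc s₀ s₁ := Ioo_subset_Icc_self hx
      exact ((hGd x hx').hasDerivAt (Icc_mem_nhds hx.1 hx.2)).differentiableAt.differentiableWithinAt
    · intro x hx
      rw [interior_Icc] at hx
      have hx' : x ∈ Icc s₀ s₁ := Ioo_subset_Icc_self hx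
      have hd := (hGd x hx').hasDerivAt (Icc_mem_nhds hx.1 hx.2)
      rw [hd.deriv]
      exact hGnonpos x hx'
  have hGle : G s₁ ≤ G s₀ := hGanti hs0 hs1 hs
  have hR0 : 0 < r (gu s₀) (gv s₀) := hRpos s₀ hs0
  have hR1 : 0 < r (gu s₁) (gv s₁) := hRpos s₁ hs1
  have hnn : 0 ≤ C * (r (gu s₀) (gv s₀))⁻¹ := by positivity
  have key : gv s₁ - gv s₀ ≤ C * (r (gu s₁) (gv s₁))⁻¹ := by
    simp only [hG] at hGle
    linarith
  calc gv s₁ - gv s₀ ≤ C * (r (gu s₁) (gv s₁))⁻¹ := key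
    _ = 2 * K * l ^ 2 / (e₀ ^ 2 * r (gu s₁) (gv s₁)) := by
      rw [hC]; field_simp

end
end

section
/- For every real number a ≥ 1 and every integer N with N ≥ 4a, the following two-sided bound holds: 1/4 ≤ Σ_{j=0}^{N−1} (a/N)·e^{−2ja/N} ≤ 1. -/
open Finset

/-- **Riemann-sum estimate for the intermediate beam profile.**
For every real `a ≥ 1` and every integer `N ≥ 4a`, the total normalized energy content
`Σ_{j=0}^{N−1} (a/N)·e^{−2ja/N}` of the intermediate beam profile satisfies the two-sided
bound `1/4 ≤ Σ ≤ 1`. -/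
theorem beam_profile_total_energy_bounds (a : ℝ) (ha : 1 ≤ a) (N : ℕ)
    (hN : 4 * a ≤ (N : ℝ)) :
    1 / 4 ≤ ∑ j ∈ Finset.range N, a / N * Real.exp (-(2 * (j : ℝ) * a / N)) ∧
      ∑ j ∈ Finset.range N, a / N * Real.exp (-(2 * (j : ℝ) * a / N)) ≤ 1 := by
  have hN0 : (0:ℝ) < N := lt_of_lt_of_le (by linarith) hN
  set x : ℝ := 2 * a / N with hxdef
  have hx0 : 0 < x := by positivity
  have hx2 : x ≤ 1/2 := by
    rw [hxdef, div_le_iff₀ hN0]; linarith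
  set r : ℝ := Real.exp (-x) with hrdef
  have hr0 : 0 < r := Real.exp_pos _
  have hr1 : r < 1 := Real.exp_lt_one_iff.mpr (by linarith)
  have hsum : ∑ j ∈ Finset.range N, a / N * Real.exp (-(2 * (j : ℝ) * a / N))
      = a / N * ((1 - r ^ N) / (1 - r)) := by
    rw [← Finset.mul_sum]
    congr 1
    have : ∀ j ∈ Finset.range N, Real.exp (-(2 * (j : ℝ) * a / N)) = r ^ j := by
      intro j _
      rw [hrdef, ← Real.exp_nat_mul]
      congr 1
      rw [hxdef]; ring
    rw [Finset.sum_congr rfl this, geom_sum_eq (ne_of_lt hr1)]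
    rw [div_eq_div_iff (by linarith) (by linarith)]
    ring
  have haN : a / N = x / 2 := by rw [hxdef]; ring
  have hrN : r ^ N = Real.exp (-(2*a)) := by
    rw [hrdef, ← Real.exp_nat_mul]
    congr 1
    rw [hxdef]
    field_simp
  have h1r : 0 < 1 - r := by linarith
  -- 1 - r ≤ x
  have hub : 1 - r ≤ x := by
    have := Real.add_one_le_exp (-x)
    rw [← hrdef] at this; linarith
  -- x/2 ≤ 1 - r
  have hlb : x / 2 ≤ 1 - r := by
    have h1 : 1 + x ≤ Real.exp x := by linarith [Real.add_one_le_exp x]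
    have h2 : r ≤ 1 / (1 + x) := by
      rw [hrdef, Real.exp_neg, ← one_div]
      exact one_div_le_one_div_of_le (by linarith) h1
    have h3 : 1 / (1 + x) ≤ 1 - x/2 := by
      rw [div_le_iff₀ (by linarith)]
      nlinarith
    linarith
  have hrNle : r ^ N ≤ 1/2 := by
    rw [hrN]
    have : Real.exp (-(2*a)) ≤ Real.exp (-2) := Real.exp_le_exp.mpr (by linarith)
    have h2 : Real.exp (-2) ≤ 1/2 := by
      rw [Real.exp_neg, ← one_div]
      rw [div_le_div_iff₀ (Real.exp_pos _) (by norm_num)]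
      nlinarith [Real.add_one_le_exp (2:ℝ)]
    linarith
  have hrN0 : 0 < r ^ N := pow_pos hr0 N
  rw [hsum, haN]
  constructor
  · -- lower bound
    have : (1/2) / x ≤ (1 - r ^ N) / (1 - r) := by
      apply div_le_div₀ (by linarith) (by linarith) h1r hub
    calc (1:ℝ)/4 = x/2 * ((1/2)/x) := by field_simp; ring
      _ ≤ x/2 * ((1 - r ^ N) / (1 - r)) := by
          apply mul_le_mul_of_nonneg_left this (by linarith)
  · have : (1 - r ^ N) / (1 - r) ≤ 1 / (x/2) := by
      apply div_le_div₀ (by positivity) (by linarith) (by linarith) hlb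
    calc x/2 * ((1 - r ^ N) / (1 - r)) ≤ x/2 * (1/(x/2)) :=
          mul_le_mul_of_nonneg_left this (by linarith)
      _ = 1 := by field_simp
end
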